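/- arXiv:1806.00841 — 3 statements merged into one kernel-verified Lean document; each statement's English description precedes it below -/
import Mathlib

section
/- Fix 1/2 < s0 < 1 and λ0 > 0 such that s0 + κ(s0)/λ0 < 1. Then there exists ε0 > 0 such that for every probability vector p with decreasing entries and finite entropy h(μ_p) = −Σ_n p_n log p_n < ∞, if p_1 ≤ ψ and min(p_1, p_2) ≤ ε0, then dim μ_p ≤ s0 + κ(s0)/λ0. -/
open MeasureTheory Filter Set
open scoped ENNReal
open scoped Topology

instance : MeasurableSpace ℕ+ := ⊤

/-- The Gauss map `T x = 1/x - ⌊1/x⌋` (with `T 0 = 0`). -/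
noncomputable def gaussMap (x : ℝ) : ℝ := if x = 0 then 0 else Int.fract x⁻¹

/-- Finite continued fraction approximants: `cfApprox n a` is the value of the
continued fraction `1/(a 0 + 1/(a 1 + ⋯))` truncated after `n` levels. -/
noncomputable def cfApprox : ℕ → (ℕ → ℕ+) → ℝ
  | 0, _ => 0
  | n + 1, a => (((a 0 : ℕ) : ℝ) + cfApprox n (fun k => a (k + 1)))⁻¹

/-- The continued fraction coding map `Π : ℕ^ℕ → [0,1] ∖ ℚ`. -/
noncomputable def cfVal (a : ℕ → ℕ+) : ℝ := limUnder atTop (fun n => cfApprox n a)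

/-- `p` is a countable probability vector `(p_n)_{n ≥ 1}`. -/
def IsProbVec (p : ℕ+ → ℝ) : Prop := (∀ n, 0 ≤ p n) ∧ HasSum p 1

/-- `m` is the Bernoulli product measure on `ℕ^ℕ` with weights `p`:
it assigns to each cylinder the product of the weights of its digits. -/
def IsBernoulli (p : ℕ+ → ℝ) (m : Measure (ℕ → ℕ+)) : Prop :=
  ∀ (n : ℕ) (i : ℕ → ℕ+),
    m {a | ∀ k < n, a k = i k} = ENNReal.ofReal (∏ k ∈ Finset.range n, p (i k))

/-- Hausdorff dimension of a measure: `inf { dim_H A : μ A = 1 }`. -/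
noncomputable def dimMeasure (μ : Measure ℝ) : ℝ≥0∞ :=
  ⨅ (A : Set ℝ) (_ : μ A = 1), dimH A


/-- `ψ = |T'(z₁)|^{-1/4} = z₁^{1/2}`, where `z₁ = (√5 - 1)/2` is the fixed point of the
Gauss map with continued fraction expansion `(1,1,1,…)`. -/
noncomputable def psi : ℝ := Real.sqrt ((Real.sqrt 5 - 1) / 2)

/-- `κ(s) = log ( sup_{x ∈ (0,1)} ∑_{n ≥ 1} (x+n)^{-2s} )`. -/
noncomputable def kappa (s : ℝ) : ℝ :=
  Real.log (sSup {y : ℝ | ∃ x ∈ Set.Ioo (0 : ℝ) 1,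
    y = ∑' n : ℕ+, ((x + ((n : ℕ) : ℝ)) ^ (2 * s))⁻¹})

namespace CFAux

noncomputable def cfF : ℕ → (ℕ → ℕ+) → ℝ → ℝ
  | 0, _, t => t
  | n + 1, a, t => (((a 0 : ℕ) : ℝ) + cfF n (fun k => a (k + 1)) t)⁻¹

lemma pnat_one_le (c : ℕ+) : (1:ℝ) ≤ ((c : ℕ) : ℝ) := by exact_mod_cast c.one_le

lemma cfF_nonneg : ∀ (n : ℕ) (a : ℕ → ℕ+) (t : ℝ), 0 ≤ t → 0 ≤ cfF n a t
  | 0, _, t, ht => ht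
  | n + 1, a, t, ht => by
      have h1 := pnat_one_le (a 0)
      have h2 := cfF_nonneg n (fun k => a (k + 1)) t ht
      simp only [cfF]
      positivity

lemma cfF_le_one : ∀ (n : ℕ) (a : ℕ → ℕ+) (t : ℝ), 0 ≤ t → n ≠ 0 → cfF n a t ≤ 1
  | 0, _, _, _, h => absurd rfl h
  | n + 1, a, t, ht, _ => by
      have h1 := pnat_one_le (a 0)
      have h2 := cfF_nonneg n (fun k => a (k + 1)) t ht
      simp only [cfF]
      rw [inv_le_one_iff₀]
      right; linarith

lemma cfF_comp : ∀ (n m : ℕ) (a : ℕ → ℕ+) (t : ℝ),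
    cfF (n + m) a t = cfF n a (cfF m (fun k => a (k + n)) t)
  | 0, m, a, t => by simp [cfF]
  | n + 1, m, a, t => by
      have h : n + 1 + m = (n + m) + 1 := by omega
      rw [h]
      simp only [cfF]
      rw [cfF_comp n m (fun k => a (k + 1)) t]
      rfl

lemma cfApprox_eq : ∀ (n : ℕ) (a : ℕ → ℕ+), cfApprox n a = cfF n a 0
  | 0, _ => rfl
  | n + 1, a => by simp only [cfApprox, cfF, cfApprox_eq n]

lemma cfF_congr : ∀ (n : ℕ) (a b : ℕ → ℕ+) (t : ℝ), (∀ k < n, a k = b k) →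
    cfF n a t = cfF n b t
  | 0, _, _, _, _ => rfl
  | n + 1, a, b, t, h => by
      simp only [cfF]
      rw [h 0 (Nat.succ_pos n), cfF_congr n (fun k => a (k + 1)) (fun k => b (k + 1)) t
        (fun k hk => h (k + 1) (by omega))]

lemma abs_inv_sub_inv {x y : ℝ} (hx : 0 < x) (hy : 0 < y) :
    |x⁻¹ - y⁻¹| = |x - y| / (x * y) := by
  rw [inv_sub_inv hx.ne' hy.ne', abs_div, abs_of_pos (mul_pos hx hy), abs_sub_comm]

lemma cfF_dist : ∀ (n : ℕ) (a : ℕ → ℕ+) (t t' : ℝ), 0 ≤ t → 0 ≤ t' →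
    |cfF n a t - cfF n a t'| ≤
      ((∏ k ∈ Finset.range n, ((a k : ℕ) : ℝ)) ^ 2)⁻¹ * |t - t'|
  | 0, _, t, t2, _, _ => by simp [cfF]
  | n + 1, a, t, t', ht, ht' => by
      set s : ℕ → ℕ+ := fun k => a (k + 1) with hs
      have hc := pnat_one_le (a 0)
      set c : ℝ := ((a 0 : ℕ) : ℝ)
      have hX : 0 ≤ cfF n s t := cfF_nonneg n s t ht
      have hX' : 0 ≤ cfF n s t' := cfF_nonneg n s t' ht'
      set X := cfF n s t
      set X' := cfF n s t'
      have h1 : (0:ℝ) < c + X := by linarith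
      have h2 : (0:ℝ) < c + X' := by linarith
      have key : |cfF (n+1) a t - cfF (n+1) a t'| = |X - X'| / ((c + X) * (c + X')) := by
        simp only [cfF]
        rw [abs_inv_sub_inv h1 h2]
        congr 1
        · rw [show c + X - (c + X') = X - X' by ring]
      have hprod : c ^ 2 ≤ (c + X) * (c + X') := by nlinarith
      have hc2 : (0:ℝ) < c ^ 2 := by positivity
      have step1 : |X - X'| / ((c + X) * (c + X')) ≤ |X - X'| / c ^ 2 :=
        div_le_div_of_nonneg_left (abs_nonneg _) hc2 hprod
      have IH := cfF_dist n s t t' ht ht'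
      have hQ : (0:ℝ) < ∏ k ∈ Finset.range n, ((s k : ℕ) : ℝ) := by
        apply Finset.prod_pos; intro i _; have := pnat_one_le (s i); linarith
      have step2 : |X - X'| / c ^ 2 ≤
          (((∏ k ∈ Finset.range (n+1), ((a k : ℕ) : ℝ)) ^ 2)⁻¹) * |t - t'| := by
        rw [Finset.prod_range_succ']
        rw [div_eq_inv_mul]
        have : ((((∏ k ∈ Finset.range n, ((a (k+1) : ℕ) : ℝ)) * c) ^ 2)⁻¹) * |t - t'|
            = (c ^ 2)⁻¹ * ((((∏ k ∈ Finset.range n, ((a (k+1) : ℕ) : ℝ))) ^ 2)⁻¹ * |t - t'|) := by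
          rw [mul_pow, mul_inv]
          ring
        rw [this]
        apply mul_le_mul_of_nonneg_left _ (by positivity)
        exact IH
      calc |cfF (n+1) a t - cfF (n+1) a t'|
          = |X - X'| / ((c + X) * (c + X')) := key
        _ ≤ |X - X'| / c ^ 2 := step1
        _ ≤ _ := step2

end CFAux

namespace CFAux

lemma cfF_two (a : ℕ → ℕ+) (t : ℝ) :
    cfF 2 a t = (((a 0 : ℕ) : ℝ) + (((a 1 : ℕ) : ℝ) + t)⁻¹)⁻¹ := rfl

lemma cfF2_contract (a : ℕ → ℕ+) (t t' : ℝ) (ht : 0 ≤ t) (ht' : 0 ≤ t') :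
    |cfF 2 a t - cfF 2 a t'| ≤ (1/4) * |t - t'| := by
  have hc0 := pnat_one_le (a 0)
  have hc1 := pnat_one_le (a 1)
  set c0 : ℝ := ((a 0 : ℕ) : ℝ)
  set c1 : ℝ := ((a 1 : ℕ) : ℝ)
  have h1 : (0:ℝ) < c1 + t := by linarith
  have h1' : (0:ℝ) < c1 + t' := by linarith
  set u := (c1 + t)⁻¹ with hu
  set u' := (c1 + t')⁻¹ with hu'
  have hu0 : 0 < u := inv_pos.2 h1
  have hu0' : 0 < u' := inv_pos.2 h1'
  have h2 : (0:ℝ) < c0 + u := by linarith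
  have h2' : (0:ℝ) < c0 + u' := by linarith
  have e1 : |cfF 2 a t - cfF 2 a t'| = |u - u'| / ((c0 + u) * (c0 + u')) := by
    rw [cfF_two, cfF_two, abs_inv_sub_inv h2 h2']
    congr 1
    rw [show c0 + u - (c0 + u') = u - u' by ring]
  have e2 : |u - u'| = |t - t'| / ((c1 + t) * (c1 + t')) := by
    rw [hu, hu', abs_inv_sub_inv h1 h1']
    congr 1
    rw [show c1 + t - (c1 + t') = t - t' by ring]
  have hmu : u * (c1 + t) = 1 := inv_mul_cancel₀ h1.ne'
  have hmu' : u' * (c1 + t') = 1 := inv_mul_cancel₀ h1'.ne'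
  have e3 : (c1 + t) * (c0 + u) = c0 * (c1 + t) + 1 := by linear_combination hmu
  have e3' : (c1 + t') * (c0 + u') = c0 * (c1 + t') + 1 := by linear_combination hmu'
  have k1 : 2 ≤ (c1 + t) * (c0 + u) := by nlinarith
  have k2 : 2 ≤ (c1 + t') * (c0 + u') := by nlinarith
  have k3 : (2:ℝ) * 2 ≤ ((c1 + t) * (c0 + u)) * ((c1 + t') * (c0 + u')) :=
    mul_le_mul k1 k2 (by norm_num) (by positivity)
  have hD : 4 ≤ ((c1 + t) * (c1 + t')) * ((c0 + u) * (c0 + u')) := by nlinarith [k3]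
  rw [e1, e2, div_div]
  have h4 : (0:ℝ) < 4 := by norm_num
  calc |t - t'| / ((c1 + t) * (c1 + t') * ((c0 + u) * (c0 + u')))
      ≤ |t - t'| / 4 := div_le_div_of_nonneg_left (abs_nonneg _) h4 hD
    _ = (1/4) * |t - t'| := by ring

lemma cfF_even_contract : ∀ (k : ℕ) (a : ℕ → ℕ+) (t t' : ℝ), 0 ≤ t → 0 ≤ t' →
    |cfF (2 * k) a t - cfF (2 * k) a t'| ≤ (1/4 : ℝ)^k * |t - t'|
  | 0, a, t, t', _, _ => by simp [cfF]
  | k + 1, a, t, t', ht, ht' => by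
      have h : 2 * (k + 1) = 2 + 2 * k := by omega
      rw [h, cfF_comp 2 (2 * k) a t, cfF_comp 2 (2 * k) a t']
      set d : ℕ → ℕ+ := fun j => a (j + 2)
      have hx : 0 ≤ cfF (2 * k) d t := cfF_nonneg _ _ _ ht
      have hx' : 0 ≤ cfF (2 * k) d t' := cfF_nonneg _ _ _ ht'
      calc |cfF 2 a (cfF (2 * k) d t) - cfF 2 a (cfF (2 * k) d t')|
          ≤ (1/4) * |cfF (2 * k) d t - cfF (2 * k) d t'| := cfF2_contract a _ _ hx hx'
        _ ≤ (1/4) * ((1/4 : ℝ)^k * |t - t'|) := by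
            have := cfF_even_contract k d t t' ht ht'
            nlinarith [abs_nonneg (cfF (2 * k) d t - cfF (2 * k) d t')]
        _ = (1/4 : ℝ)^(k+1) * |t - t'| := by ring

lemma cfF_mem_unit (n : ℕ) (a : ℕ → ℕ+) (t : ℝ) (ht : 0 ≤ t) (ht1 : t ≤ 1) :
    0 ≤ cfF n a t ∧ cfF n a t ≤ 1 := by
  refine ⟨cfF_nonneg n a t ht, ?_⟩
  cases n with
  | zero => exact ht1
  | succ n => exact cfF_le_one (n+1) a t ht (Nat.succ_ne_zero n)

lemma cfF_contract (n : ℕ) (a : ℕ → ℕ+) (t t' : ℝ)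
    (ht : 0 ≤ t) (ht1 : t ≤ 1) (ht' : 0 ≤ t') (ht1' : t' ≤ 1) :
    |cfF n a t - cfF n a t'| ≤ (1/4 : ℝ)^(n / 2) := by
  have hsplit : n = 2 * (n / 2) + n % 2 := by omega
  set d : ℕ → ℕ+ := fun j => a (j + 2 * (n / 2))
  obtain ⟨hy, hy1⟩ := cfF_mem_unit (n % 2) d t ht ht1
  obtain ⟨hy', hy1'⟩ := cfF_mem_unit (n % 2) d t' ht' ht1'
  have key : |cfF (2 * (n / 2) + n % 2) a t - cfF (2 * (n / 2) + n % 2) a t'|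
      ≤ (1/4 : ℝ)^(n / 2) := by
    rw [cfF_comp (2 * (n / 2)) (n % 2) a t, cfF_comp (2 * (n / 2)) (n % 2) a t']
    calc |cfF (2 * (n / 2)) a (cfF (n % 2) d t) - cfF (2 * (n / 2)) a (cfF (n % 2) d t')|
        ≤ (1/4 : ℝ)^(n / 2) * |cfF (n % 2) d t - cfF (n % 2) d t'| :=
          cfF_even_contract _ a _ _ hy hy'
      _ ≤ (1/4 : ℝ)^(n / 2) * 1 := by
          apply mul_le_mul_of_nonneg_left _ (by positivity)
          rw [abs_le]; constructor <;> linarith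
      _ = (1/4 : ℝ)^(n / 2) := mul_one _
  rw [← hsplit] at key
  exact key

lemma cfApprox_mem_unit (n : ℕ) (a : ℕ → ℕ+) : 0 ≤ cfApprox n a ∧ cfApprox n a ≤ 1 := by
  rw [cfApprox_eq]
  exact cfF_mem_unit n a 0 le_rfl zero_le_one

lemma cfApprox_dist (N n : ℕ) (hN : N ≤ n) (a : ℕ → ℕ+) :
    |cfApprox n a - cfApprox N a| ≤ (1/4 : ℝ)^(N / 2) := by
  have h : n = N + (n - N) := by omega
  rw [h, cfApprox_eq, cfApprox_eq, cfF_comp N (n - N) a 0]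
  obtain ⟨hy, hy1⟩ := cfF_mem_unit (n - N) (fun k => a (k + N)) 0 le_rfl zero_le_one
  exact cfF_contract N a _ 0 hy hy1 le_rfl zero_le_one

lemma cfApprox_cauchy (a : ℕ → ℕ+) : CauchySeq (fun n => cfApprox n a) := by
  apply cauchySeq_of_le_tendsto_0 (b := fun N => 2 * (1/4 : ℝ)^(N / 2))
  · intro n m N hn hm
    have h1 := cfApprox_dist N n hn a
    have h2 := cfApprox_dist N m hm a
    rw [Real.dist_eq]
    calc |cfApprox n a - cfApprox m a|
        ≤ |cfApprox n a - cfApprox N a| + |cfApprox N a - cfApprox m a| := abs_sub_le _ _ _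
      _ ≤ (1/4 : ℝ)^(N / 2) + (1/4 : ℝ)^(N / 2) := by
          rw [abs_sub_comm (cfApprox N a)]; linarith
      _ = 2 * (1/4 : ℝ)^(N / 2) := by ring
  · have h1 : Tendsto (fun q : ℕ => (1/4 : ℝ)^q) atTop (𝓝 0) :=
      tendsto_pow_atTop_nhds_zero_of_lt_one (by norm_num) (by norm_num)
    have h2 : Tendsto (fun N : ℕ => N / 2) atTop atTop :=
      tendsto_atTop_atTop.2 fun b => ⟨2 * b, fun n hn => by omega⟩
    have := (h1.comp h2).const_mul (2:ℝ)
    simpa using this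

lemma tendsto_cfApprox (a : ℕ → ℕ+) :
    Tendsto (fun n => cfApprox n a) atTop (𝓝 (cfVal a)) := by
  obtain ⟨L, hL⟩ := cauchySeq_tendsto_of_complete (cfApprox_cauchy a)
  have : cfVal a = L := hL.limUnder_eq
  rw [this]; exact hL

lemma cfVal_nonneg (a : ℕ → ℕ+) : 0 ≤ cfVal a :=
  ge_of_tendsto' (tendsto_cfApprox a) (fun n => (cfApprox_mem_unit n a).1)

lemma cfVal_le_one (a : ℕ → ℕ+) : cfVal a ≤ 1 :=
  le_of_tendsto' (tendsto_cfApprox a) (fun n => (cfApprox_mem_unit n a).2)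

end CFAux

namespace CFAux

lemma prod_coe_pos (n : ℕ) (a : ℕ → ℕ+) :
    (0:ℝ) < ∏ k ∈ Finset.range n, ((a k : ℕ) : ℝ) := by
  apply Finset.prod_pos
  intro i _
  have := pnat_one_le (a i)
  linarith

lemma one_le_prod_coe (n : ℕ) (a : ℕ → ℕ+) :
    (1:ℝ) ≤ ∏ k ∈ Finset.range n, ((a k : ℕ) : ℝ) := by
  have := Finset.prod_le_prod (s := Finset.range n) (f := fun _ => (1:ℝ))
    (g := fun k => ((a k : ℕ) : ℝ)) (fun i _ => zero_le_one) (fun i _ => pnat_one_le (a i))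
  simpa using this

lemma cfVal_eq_cfF (n : ℕ) (a : ℕ → ℕ+) :
    cfVal a = cfF n a (cfVal (fun k => a (k + n))) := by
  set d : ℕ → ℕ+ := fun k => a (k + n) with hd
  have h1 : Tendsto (fun m => cfApprox (n + m) a) atTop (𝓝 (cfVal a)) := by
    apply (tendsto_cfApprox a).comp
    exact tendsto_atTop_atTop.2 fun b => ⟨b, fun x hx => by omega⟩
  have heq : ∀ m, cfApprox (n + m) a = cfF n a (cfApprox m d) := by
    intro m
    rw [cfApprox_eq, cfF_comp n m a 0, cfApprox_eq]
  have h2 : Tendsto (fun m => cfF n a (cfApprox m d)) atTop (𝓝 (cfF n a (cfVal d))) := by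
    rw [tendsto_iff_dist_tendsto_zero]
    apply squeeze_zero (fun m => dist_nonneg) (g := fun m => dist (cfApprox m d) (cfVal d))
    · intro m
      rw [Real.dist_eq, Real.dist_eq]
      calc |cfF n a (cfApprox m d) - cfF n a (cfVal d)|
          ≤ ((∏ k ∈ Finset.range n, ((a k : ℕ) : ℝ)) ^ 2)⁻¹ * |cfApprox m d - cfVal d| :=
            cfF_dist n a _ _ (cfApprox_mem_unit m d).1 (cfVal_nonneg d)
        _ ≤ 1 * |cfApprox m d - cfVal d| := by
            apply mul_le_mul_of_nonneg_right _ (abs_nonneg _)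
            rw [inv_le_one_iff₀]
            right
            nlinarith [one_le_prod_coe n a]
        _ = |cfApprox m d - cfVal d| := one_mul _
    · rw [← tendsto_iff_dist_tendsto_zero]
      exact tendsto_cfApprox d
  have h3 : Tendsto (fun m => cfApprox (n + m) a) atTop (𝓝 (cfF n a (cfVal d))) := by
    simpa only [heq] using h2
  exact tendsto_nhds_unique h1 h3

lemma cfVal_dist (n : ℕ) (a b : ℕ → ℕ+) (hab : ∀ k < n, a k = b k) :
    |cfVal a - cfVal b| ≤ ((∏ k ∈ Finset.range n, ((a k : ℕ) : ℝ)) ^ 2)⁻¹ := by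
  rw [cfVal_eq_cfF n a, cfVal_eq_cfF n b]
  rw [← cfF_congr n a b _ hab]
  set ta := cfVal (fun k => a (k + n))
  set tb := cfVal (fun k => b (k + n))
  have h1 : 0 ≤ ta := cfVal_nonneg _
  have h2 : ta ≤ 1 := cfVal_le_one _
  have h3 : 0 ≤ tb := cfVal_nonneg _
  have h4 : tb ≤ 1 := cfVal_le_one _
  calc |cfF n a ta - cfF n a tb|
      ≤ ((∏ k ∈ Finset.range n, ((a k : ℕ) : ℝ)) ^ 2)⁻¹ * |ta - tb| := cfF_dist n a _ _ h1 h3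
    _ ≤ ((∏ k ∈ Finset.range n, ((a k : ℕ) : ℝ)) ^ 2)⁻¹ * 1 := by
        apply mul_le_mul_of_nonneg_left _ (by positivity)
        rw [abs_le]; constructor <;> linarith
    _ = _ := mul_one _

lemma measurable_pnat {α : Type*} [MeasurableSpace α] (f : ℕ+ → α) : Measurable f :=
  measurable_from_top

lemma measurable_cfApprox (n : ℕ) : Measurable (fun a : ℕ → ℕ+ => cfApprox n a) := by
  induction n with
  | zero => simp only [cfApprox]; exact measurable_const
  | succ n ih =>
      have h1 : Measurable (fun a : ℕ → ℕ+ => ((a 0 : ℕ) : ℝ)) :=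
        (measurable_pnat (fun x : ℕ+ => ((x : ℕ) : ℝ))).comp (measurable_pi_apply 0)
      have h2 : Measurable (fun a : ℕ → ℕ+ => cfApprox n (fun k => a (k + 1))) :=
        ih.comp (measurable_pi_lambda _ fun k => measurable_pi_apply (k + 1))
      have h3 : Measurable (fun a : ℕ → ℕ+ => (((a 0 : ℕ) : ℝ) + cfApprox n (fun k => a (k + 1)))⁻¹) :=
        (h1.add h2).inv
      simpa only [cfApprox] using h3

lemma measurable_cfVal : Measurable cfVal := by
  apply measurable_of_tendsto_metrizable (fun n => measurable_cfApprox n)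
  rw [tendsto_pi_nhds]
  exact fun a => tendsto_cfApprox a

end CFAux


namespace CFAux

variable {s0 : ℝ}

lemma summable_nat_shift (hs : 1/2 < s0) (x : ℝ) (hx : 0 ≤ x) :
    Summable (fun n : ℕ+ => ((x + ((n : ℕ) : ℝ)) ^ (2 * s0))⁻¹) := by
  have hp : 1 < 2 * s0 := by linarith
  have hbase : Summable (fun n : ℕ => (((n : ℝ)) ^ (2 * s0))⁻¹) :=
    Real.summable_nat_rpow_inv.2 hp
  have hsub : Summable (fun n : ℕ+ => (((n : ℕ) : ℝ) ^ (2 * s0))⁻¹) := by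
    exact hbase.subtype {n : ℕ | 0 < n}
  apply Summable.of_nonneg_of_le (fun n => by positivity) _ hsub
  intro n
  have h1 : (0:ℝ) < ((n : ℕ) : ℝ) := by exact_mod_cast n.pos
  have h2 : ((n : ℕ) : ℝ) ≤ x + ((n : ℕ) : ℝ) := by linarith
  have h3 : ((n : ℕ) : ℝ) ^ (2 * s0) ≤ (x + ((n : ℕ) : ℝ)) ^ (2 * s0) :=
    Real.rpow_le_rpow h1.le h2 (by linarith)
  exact inv_anti₀ (Real.rpow_pos_of_pos h1 _) h3

lemma summable_Z (hs : 1/2 < s0) :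
    Summable (fun n : ℕ+ => (((n : ℕ) : ℝ) ^ (2 * s0))⁻¹) := by
  simpa using summable_nat_shift hs 0 le_rfl

/-- the sup set in the definition of kappa -/
def kappaSet (s0 : ℝ) : Set ℝ :=
  {y : ℝ | ∃ x ∈ Set.Ioo (0 : ℝ) 1, y = ∑' n : ℕ+, ((x + ((n : ℕ) : ℝ)) ^ (2 * s0))⁻¹}

lemma kappaSet_bddAbove (hs : 1/2 < s0) :
    BddAbove (kappaSet s0) := by
  refine ⟨∑' n : ℕ+, (((n : ℕ) : ℝ) ^ (2 * s0))⁻¹, ?_⟩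
  rintro y ⟨x, hx, rfl⟩
  apply Summable.tsum_le_tsum _ (summable_nat_shift hs x hx.1.le) (summable_Z hs)
  intro n
  have h1 : (0:ℝ) < ((n : ℕ) : ℝ) := by exact_mod_cast n.pos
  have h3 : ((n : ℕ) : ℝ) ^ (2 * s0) ≤ (x + ((n : ℕ) : ℝ)) ^ (2 * s0) :=
    Real.rpow_le_rpow h1.le (by linarith [hx.1]) (by linarith)
  exact inv_anti₀ (Real.rpow_pos_of_pos h1 _) h3

lemma kappaSet_mem (hs : 1/2 < s0) {x : ℝ} (hx : x ∈ Set.Ioo (0:ℝ) 1) :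
    (∑' n : ℕ+, ((x + ((n : ℕ) : ℝ)) ^ (2 * s0))⁻¹) ∈ kappaSet s0 := ⟨x, hx, rfl⟩

lemma finsum_le_sSup (hs : 1/2 < s0) (F : Finset ℕ+) :
    ∑ n ∈ F, (((n : ℕ) : ℝ) ^ (2 * s0))⁻¹ ≤ sSup (kappaSet s0) := by
  have htend : Tendsto (fun x : ℝ => ∑ n ∈ F, ((x + ((n : ℕ) : ℝ)) ^ (2 * s0))⁻¹)
      (nhdsWithin 0 (Set.Ioi 0)) (𝓝 (∑ n ∈ F, ((0 + ((n : ℕ) : ℝ)) ^ (2 * s0))⁻¹)) := by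
    apply tendsto_finset_sum
    intro n _
    have h1 : (0:ℝ) < ((n : ℕ) : ℝ) := by exact_mod_cast n.pos
    have hcont : ContinuousAt (fun x : ℝ => ((x + ((n : ℕ) : ℝ)) ^ (2 * s0))⁻¹) 0 := by
      have hinner : ContinuousAt (fun x : ℝ => x + ((n : ℕ) : ℝ)) 0 :=
        (continuous_id.add continuous_const).continuousAt
      have houter : ContinuousAt (fun y : ℝ => y ^ (2 * s0))
          ((fun x : ℝ => x + ((n : ℕ) : ℝ)) 0) :=
        Real.continuousAt_rpow_const _ _
          (Or.inl (ne_of_gt (show (0:ℝ) < 0 + ((n : ℕ) : ℝ) by linarith)))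
      have hcomp : ContinuousAt (fun x : ℝ => (x + ((n : ℕ) : ℝ)) ^ (2 * s0)) 0 :=
        ContinuousAt.comp (x := (0:ℝ)) (f := fun x : ℝ => x + ((n : ℕ) : ℝ)) houter hinner
      exact hcomp.inv₀
        (ne_of_gt (Real.rpow_pos_of_pos (show (0:ℝ) < 0 + ((n : ℕ) : ℝ) by linarith) _))
    exact hcont.continuousWithinAt.tendsto
  have hev : ∀ᶠ x in nhdsWithin (0:ℝ) (Set.Ioi 0),
      (∑ n ∈ F, ((x + ((n : ℕ) : ℝ)) ^ (2 * s0))⁻¹) ≤ sSup (kappaSet s0) := by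
    filter_upwards [Ioo_mem_nhdsGT_of_mem (Set.mem_Ico.2 ⟨le_rfl, (one_pos : (0:ℝ) < 1)⟩)]
      with x hx
    calc ∑ n ∈ F, ((x + ((n : ℕ) : ℝ)) ^ (2 * s0))⁻¹
        ≤ ∑' n : ℕ+, ((x + ((n : ℕ) : ℝ)) ^ (2 * s0))⁻¹ :=
          Summable.sum_le_tsum F (fun n _ => by
            have h1 : (0:ℝ) < ((n : ℕ) : ℝ) := by exact_mod_cast n.pos
            exact inv_nonneg.2 (Real.rpow_nonneg (by linarith [hx.1]) _))
            (summable_nat_shift hs x hx.1.le)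
      _ ≤ sSup (kappaSet s0) := le_csSup (kappaSet_bddAbove hs) (kappaSet_mem hs hx)
  have := le_of_tendsto htend hev
  simpa using this

lemma Z_le_sSup (hs : 1/2 < s0) :
    (∑' n : ℕ+, (((n : ℕ) : ℝ) ^ (2 * s0))⁻¹) ≤ sSup (kappaSet s0) :=
  Summable.tsum_le_of_sum_le (summable_Z hs) (finsum_le_sSup hs)

lemma one_le_Z (hs : 1/2 < s0) :
    (1:ℝ) ≤ ∑' n : ℕ+, (((n : ℕ) : ℝ) ^ (2 * s0))⁻¹ := by
  have h := Summable.le_tsum (summable_Z hs) 1 (fun n _ => by positivity)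
  simpa using h

lemma sSup_pos (hs : 1/2 < s0) : (0:ℝ) < sSup (kappaSet s0) :=
  lt_of_lt_of_le one_pos (le_trans (one_le_Z hs) (Z_le_sSup hs))

lemma kappa_nonneg (hs : 1/2 < s0) : 0 ≤ kappa s0 :=
  Real.log_nonneg (le_trans (one_le_Z hs) (Z_le_sSup hs))

lemma Z_le_exp_kappa (hs : 1/2 < s0) :
    (∑' n : ℕ+, (((n : ℕ) : ℝ) ^ (2 * s0))⁻¹) ≤ Real.exp (kappa s0) := by
  have : Real.exp (kappa s0) = sSup (kappaSet s0) := Real.exp_log (sSup_pos hs)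
  rw [this]
  exact Z_le_sSup hs

end CFAux


namespace CFAux

lemma pnat_measurableSet (s : Set ℕ+) : MeasurableSet s :=
  MeasurableSpace.measurableSet_top

instance : MeasurableSingletonClass ℕ+ := ⟨fun _ => pnat_measurableSet _⟩

lemma tsum_pi_prod : ∀ (n : ℕ) (h : Fin n → ℕ+ → ℝ≥0∞),
    ∑' w : Fin n → ℕ+, ∏ k, h k (w k) = ∏ k, ∑' x : ℕ+, h k x
  | 0, h => by
      rw [tsum_fintype]
      simp
  | n + 1, h => by
      rw [← Equiv.tsum_eq (Fin.consEquiv (fun _ : Fin (n + 1) => ℕ+))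
        (fun w => ∏ k, h k (w k))]
      have hterm : ∀ z : ℕ+ × (Fin n → ℕ+),
          (∏ k, h k (((Fin.consEquiv (fun _ : Fin (n + 1) => ℕ+)) z) k))
            = h 0 z.1 * ∏ k : Fin n, h k.succ (z.2 k) := by
        rintro ⟨x, v⟩
        rw [Fin.prod_univ_succ]
        simp [Fin.consEquiv]
      calc ∑' z : ℕ+ × (Fin n → ℕ+), ∏ k, h k (((Fin.consEquiv (fun _ : Fin (n + 1) => ℕ+)) z) k)
          = ∑' z : ℕ+ × (Fin n → ℕ+), h 0 z.1 * ∏ k : Fin n, h k.succ (z.2 k) := by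
            exact tsum_congr hterm
        _ = ∑' (x : ℕ+), ∑' (v : Fin n → ℕ+), h 0 x * ∏ k : Fin n, h k.succ (v k) :=
            ENNReal.tsum_prod'
        _ = ∑' (x : ℕ+), h 0 x * ∑' (v : Fin n → ℕ+), ∏ k : Fin n, h k.succ (v k) := by
            congr 1; funext x; exact ENNReal.tsum_mul_left
        _ = (∑' (x : ℕ+), h 0 x) * ∑' (v : Fin n → ℕ+), ∏ k : Fin n, h k.succ (v k) :=
            ENNReal.tsum_mul_right
        _ = (∑' (x : ℕ+), h 0 x) * ∏ k : Fin n, ∑' x : ℕ+, h k.succ x := by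
            rw [tsum_pi_prod n (fun k => h k.succ)]
        _ = ∏ k, ∑' x : ℕ+, h k x := by rw [Fin.prod_univ_succ]

def cylinder (n : ℕ) (w : Fin n → ℕ+) : Set (ℕ → ℕ+) :=
  {a : ℕ → ℕ+ | ∀ k : Fin n, a (k : ℕ) = w k}

lemma cylinder_measurable (n : ℕ) (w : Fin n → ℕ+) : MeasurableSet (cylinder n w) := by
  have : cylinder n w = ⋂ k : Fin n, (fun a : ℕ → ℕ+ => a (k : ℕ)) ⁻¹' {w k} := by
    ext a; simp [cylinder]
  rw [this]
  exact MeasurableSet.iInter fun k => (measurable_pi_apply _) (pnat_measurableSet _)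

variable {p : ℕ+ → ℝ} {m : Measure (ℕ → ℕ+)}

lemma m_cylinder (hb : IsBernoulli p m) (n : ℕ) (w : Fin n → ℕ+) :
    m (cylinder n w) = ENNReal.ofReal (∏ k, p (w k)) := by
  set i : ℕ → ℕ+ := fun j => if h : j < n then w ⟨j, h⟩ else 1 with hi
  have hset : {a : ℕ → ℕ+ | ∀ k < n, a k = i k} = cylinder n w := by
    ext a
    constructor
    · intro h k
      have h1 := h (k : ℕ) k.2
      have h2 : i (k : ℕ) = w k := by simp [hi, k.2]
      rw [h1, h2]
    · intro h k hk
      have h2 : i k = w ⟨k, hk⟩ := by simp [hi, hk]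
      rw [h2]
      exact h ⟨k, hk⟩
  have hprod : (∏ k ∈ Finset.range n, p (i k)) = ∏ k : Fin n, p (w k) := by
    rw [← Fin.prod_univ_eq_prod_range (fun j => p (i j)) n]
    apply Finset.prod_congr rfl
    intro k _
    have h2 : i (k : ℕ) = w k := by simp [hi, k.2]
    rw [h2]
  rw [← hset, hb n i, hprod]

def prefixMap (n : ℕ) (a : ℕ → ℕ+) : Fin n → ℕ+ := fun k => a (k : ℕ)

lemma marg (hb : IsBernoulli p m) (n : ℕ) (S : Set (Fin n → ℕ+)) :
    m (prefixMap n ⁻¹' S) = ∑' w : S, ENNReal.ofReal (∏ k, p ((w : Fin n → ℕ+) k)) := by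
  have hdecomp : prefixMap n ⁻¹' S = ⋃ w : S, cylinder n (w : Fin n → ℕ+) := by
    ext a
    constructor
    · intro ha
      exact Set.mem_iUnion.2 ⟨⟨prefixMap n a, ha⟩, fun k => rfl⟩
    · intro ha
      obtain ⟨w, hw⟩ := Set.mem_iUnion.1 ha
      have : prefixMap n a = (w : Fin n → ℕ+) := funext fun k => hw k
      show prefixMap n a ∈ S
      rw [this]; exact w.2
  have hdisj : Pairwise (Function.onFun Disjoint fun w : S => cylinder n (w : Fin n → ℕ+)) := by
    rintro w w' hne
    rw [Function.onFun, Set.disjoint_left]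
    intro a ha ha'
    apply hne
    apply Subtype.ext
    funext k
    rw [← ha k, ← ha' k]
  rw [hdecomp, measure_iUnion hdisj fun w => cylinder_measurable n _]
  exact tsum_congr fun w => m_cylinder hb n _

lemma tsum_ofReal_p (hp : IsProbVec p) : ∑' x : ℕ+, ENNReal.ofReal (p x) = 1 := by
  rw [← ENNReal.ofReal_tsum_of_nonneg hp.1 hp.2.summable, hp.2.tsum_eq, ENNReal.ofReal_one]

lemma ofReal_prod_eq (n : ℕ) (hp : IsProbVec p) (w : Fin n → ℕ+) :
    ENNReal.ofReal (∏ k, p (w k)) = ∏ k, ENNReal.ofReal (p (w k)) :=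
  ENNReal.ofReal_prod_of_nonneg fun k _ => hp.1 _

end CFAux

namespace CFAux

open scoped Classical

variable {p : ℕ+ → ℝ} {m : Measure (ℕ → ℕ+)}

lemma tsum_subtype_prod_eq (hp : IsProbVec p) (n : ℕ) (S : Set (Fin n → ℕ+))
    (h : Fin n → ℕ+ → ℝ≥0∞)
    (hSh : ∀ w : Fin n → ℕ+, (∏ k, h k (w k)) =
      S.indicator (fun w => ∏ k, ENNReal.ofReal (p (w k))) w) :
    (∑' w : S, ENNReal.ofReal (∏ k, p ((w : Fin n → ℕ+) k))) = ∏ k, ∑' x : ℕ+, h k x := by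
  rw [← tsum_pi_prod n h]
  rw [tsum_subtype S (fun w => ENNReal.ofReal (∏ k, p (w k)))]
  apply tsum_congr
  intro w
  rw [hSh w]
  by_cases hw : w ∈ S
  · rw [Set.indicator_of_mem hw, Set.indicator_of_mem hw, ofReal_prod_eq n hp]
  · rw [Set.indicator_of_notMem hw, Set.indicator_of_notMem hw]

lemma tsum_single_pnat (x : ℕ+) (f : ℕ+ → ℝ≥0∞) :
    (∑' y : ℕ+, if y = x then f y else 0) = f x := by
  rw [tsum_eq_single x (fun y hy => by rw [if_neg hy])]
  simp

lemma mSingle (hp : IsProbVec p) (hb : IsBernoulli p m) (j : ℕ) (x : ℕ+) :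
    m {a : ℕ → ℕ+ | a j = x} = ENNReal.ofReal (p x) := by
  set S : Set (Fin (j+1) → ℕ+) := {w | w (Fin.last j) = x} with hS
  have hpre : {a : ℕ → ℕ+ | a j = x} = prefixMap (j+1) ⁻¹' S := by
    ext a
    simp [hS, prefixMap, Fin.last]
  set h : Fin (j+1) → ℕ+ → ℝ≥0∞ :=
    fun k y => if k = Fin.last j ∧ y ≠ x then 0 else ENNReal.ofReal (p y) with hh
  have hval : ∀ k y, h k y = if k = Fin.last j ∧ y ≠ x then 0 else ENNReal.ofReal (p y) :=
    fun k y => rfl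
  have hSh : ∀ w : Fin (j+1) → ℕ+, (∏ k, h k (w k)) =
      S.indicator (fun w => ∏ k, ENNReal.ofReal (p (w k))) w := by
    intro w
    by_cases hw : w ∈ S
    · rw [Set.indicator_of_mem hw]
      apply Finset.prod_congr rfl
      intro k _
      rw [hval, if_neg]
      rintro ⟨hk, hy⟩
      exact hy (by rw [hk]; exact hw)
    · rw [Set.indicator_of_notMem hw]
      apply Finset.prod_eq_zero (Finset.mem_univ (Fin.last j))
      rw [hval, if_pos ⟨rfl, hw⟩]
  rw [hpre, marg hb (j+1) S, tsum_subtype_prod_eq hp (j+1) S h hSh]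
  have hlast : (∑' y : ℕ+, h (Fin.last j) y) = ENNReal.ofReal (p x) := by
    have h1 : ∀ y : ℕ+, h (Fin.last j) y = if y = x then ENNReal.ofReal (p y) else 0 := by
      intro y
      rw [hval]
      by_cases hy : y = x
      · rw [if_neg (by simp [hy]), if_pos hy]
      · rw [if_pos ⟨rfl, hy⟩, if_neg hy]
    rw [tsum_congr h1, tsum_single_pnat]
  have hother : ∀ k : Fin (j+1), k ≠ Fin.last j → (∑' y : ℕ+, h k y) = 1 := by
    intro k hk
    have h1 : ∀ y : ℕ+, h k y = ENNReal.ofReal (p y) := by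
      intro y
      rw [hval, if_neg]
      rintro ⟨h1, _⟩
      exact hk h1
    rw [tsum_congr h1, tsum_ofReal_p hp]
  rw [Finset.prod_eq_single (Fin.last j) (fun k _ hk => hother k hk) (by simp)]
  exact hlast

lemma mPair (hp : IsProbVec p) (hb : IsBernoulli p m) {i j : ℕ} (hij : i < j) (x y : ℕ+) :
    m {a : ℕ → ℕ+ | a i = x ∧ a j = y}
      = ENNReal.ofReal (p x) * ENNReal.ofReal (p y) := by
  have hi : i < j + 1 := by omega
  set ki : Fin (j+1) := ⟨i, hi⟩ with hki
  have hne : ki ≠ Fin.last j := by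
    rw [hki]
    intro hcon
    have := congrArg Fin.val hcon
    simp [Fin.last] at this
    omega
  set S : Set (Fin (j+1) → ℕ+) := {w | w ki = x ∧ w (Fin.last j) = y} with hS
  have hpre : {a : ℕ → ℕ+ | a i = x ∧ a j = y} = prefixMap (j+1) ⁻¹' S := by
    ext a
    simp [hS, prefixMap, Fin.last, hki]
  set h : Fin (j+1) → ℕ+ → ℝ≥0∞ :=
    fun k z => if (k = ki ∧ z ≠ x) ∨ (k = Fin.last j ∧ z ≠ y) then 0
      else ENNReal.ofReal (p z) with hh
  have hval : ∀ k z, h k z = if (k = ki ∧ z ≠ x) ∨ (k = Fin.last j ∧ z ≠ y) then 0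
      else ENNReal.ofReal (p z) := fun k z => rfl
  have hSh : ∀ w : Fin (j+1) → ℕ+, (∏ k, h k (w k)) =
      S.indicator (fun w => ∏ k, ENNReal.ofReal (p (w k))) w := by
    intro w
    by_cases hw : w ∈ S
    · rw [Set.indicator_of_mem hw]
      apply Finset.prod_congr rfl
      intro k _
      rw [hval, if_neg]
      rintro (⟨hk, hz⟩ | ⟨hk, hz⟩)
      · exact hz (by rw [hk]; exact hw.1)
      · exact hz (by rw [hk]; exact hw.2)
    · rw [Set.indicator_of_notMem hw]
      rw [hS, Set.mem_setOf_eq, not_and_or] at hw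
      rcases hw with hw | hw
      · exact Finset.prod_eq_zero (Finset.mem_univ ki)
          (by rw [hval, if_pos (Or.inl ⟨rfl, hw⟩)])
      · exact Finset.prod_eq_zero (Finset.mem_univ (Fin.last j))
          (by rw [hval, if_pos (Or.inr ⟨rfl, hw⟩)])
  rw [hpre, marg hb (j+1) S, tsum_subtype_prod_eq hp (j+1) S h hSh]
  have hki_sum : (∑' z : ℕ+, h ki z) = ENNReal.ofReal (p x) := by
    have h1 : ∀ z : ℕ+, h ki z = if z = x then ENNReal.ofReal (p z) else 0 := by
      intro z
      rw [hval]
      by_cases hz : z = x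
      · rw [if_neg, if_pos hz]
        rintro (⟨_, hzz⟩ | ⟨hk, _⟩)
        · exact hzz hz
        · exact hne hk
      · rw [if_pos (Or.inl ⟨rfl, hz⟩), if_neg hz]
    rw [tsum_congr h1, tsum_single_pnat]
  have hlast_sum : (∑' z : ℕ+, h (Fin.last j) z) = ENNReal.ofReal (p y) := by
    have h1 : ∀ z : ℕ+, h (Fin.last j) z = if z = y then ENNReal.ofReal (p z) else 0 := by
      intro z
      rw [hval]
      by_cases hz : z = y
      · rw [if_neg, if_pos hz]
        rintro (⟨hk, _⟩ | ⟨_, hzz⟩)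
        · exact hne hk.symm
        · exact hzz hz
      · rw [if_pos (Or.inr ⟨rfl, hz⟩), if_neg hz]
    rw [tsum_congr h1, tsum_single_pnat]
  have hother : ∀ k : Fin (j+1), k ≠ ki → k ≠ Fin.last j → (∑' z : ℕ+, h k z) = 1 := by
    intro k hk1 hk2
    have h1 : ∀ z : ℕ+, h k z = ENNReal.ofReal (p z) := by
      intro z
      rw [hval, if_neg]
      rintro (⟨h1, _⟩ | ⟨h1, _⟩)
      exacts [hk1 h1, hk2 h1]
    rw [tsum_congr h1, tsum_ofReal_p hp]
  have hpair := Finset.prod_pair (f := fun k => ∑' z : ℕ+, h k z) hne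
  have hfull : (∏ k, ∑' z : ℕ+, h k z)
      = ∏ k ∈ ({ki, Fin.last j} : Finset (Fin (j+1))), ∑' z : ℕ+, h k z := by
    symm
    apply Finset.prod_subset (Finset.subset_univ _)
    intro k _ hk
    simp only [Finset.mem_insert, Finset.mem_singleton, not_or] at hk
    exact hother k hk.1 hk.2
  rw [hfull, hpair]
  simp only [hki_sum, hlast_sum]

lemma measurable_eval_set (j : ℕ) (x : ℕ+) :
    MeasurableSet {a : ℕ → ℕ+ | a j = x} := by
  have h : MeasurableSet ((fun a : ℕ → ℕ+ => a j) ⁻¹' {x}) :=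
    measurable_pi_apply j (pnat_measurableSet _)
  exact h

lemma eval_preimage_measure (hp : IsProbVec p) (hb : IsBernoulli p m) (j : ℕ) (S : Set ℕ+) :
    m ((fun a : ℕ → ℕ+ => a j) ⁻¹' S) = ∑' x : S, ENNReal.ofReal (p (x : ℕ+)) := by
  have hdecomp : (fun a : ℕ → ℕ+ => a j) ⁻¹' S = ⋃ x : S, {a : ℕ → ℕ+ | a j = (x : ℕ+)} := by
    ext a
    simp only [Set.mem_preimage, Set.mem_iUnion, Set.mem_setOf_eq]
    exact ⟨fun h => ⟨⟨a j, h⟩, rfl⟩, fun ⟨x, hx⟩ => hx ▸ x.2⟩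
  have hdisj : Pairwise (Function.onFun Disjoint
      fun x : S => {a : ℕ → ℕ+ | a j = (x : ℕ+)}) := by
    rintro x x' hne
    rw [Function.onFun, Set.disjoint_left]
    intro a ha ha'
    exact hne (Subtype.ext (by rw [← ha, ← ha']))
  rw [hdecomp, measure_iUnion hdisj fun x => measurable_eval_set j _]
  exact tsum_congr fun x => mSingle hp hb j _

lemma pair_meas (i j : ℕ) (x y : ℕ+) :
    MeasurableSet {a : ℕ → ℕ+ | a i = x ∧ a j = y} := by
  have h : MeasurableSet ({a : ℕ → ℕ+ | a i = x} ∩ {a : ℕ → ℕ+ | a j = y}) :=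
    (measurable_eval_set i x).inter (measurable_eval_set j y)
  exact h

lemma pair_preimage_measure (hp : IsProbVec p) (hb : IsBernoulli p m) {i j : ℕ} (hij : i < j)
    (A B : Set ℕ+) :
    m ((fun a : ℕ → ℕ+ => a i) ⁻¹' A ∩ (fun a : ℕ → ℕ+ => a j) ⁻¹' B)
      = m ((fun a : ℕ → ℕ+ => a i) ⁻¹' A) * m ((fun a : ℕ → ℕ+ => a j) ⁻¹' B) := by
  have hdecomp : (fun a : ℕ → ℕ+ => a i) ⁻¹' A ∩ (fun a : ℕ → ℕ+ => a j) ⁻¹' B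
      = ⋃ x : A, ⋃ y : B, {a : ℕ → ℕ+ | a i = (x : ℕ+) ∧ a j = (y : ℕ+)} := by
    ext a
    simp only [Set.mem_inter_iff, Set.mem_preimage, Set.mem_iUnion, Set.mem_setOf_eq]
    constructor
    · rintro ⟨h1, h2⟩
      exact ⟨⟨a i, h1⟩, ⟨a j, h2⟩, rfl, rfl⟩
    · rintro ⟨x, y, h1, h2⟩
      rw [h1, h2]
      exact ⟨x.2, y.2⟩
  have hdisj2 : ∀ x : A, Pairwise (Function.onFun Disjoint
      fun y : B => {a : ℕ → ℕ+ | a i = (x : ℕ+) ∧ a j = (y : ℕ+)}) := by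
    rintro x y y' hne
    rw [Function.onFun, Set.disjoint_left]
    intro a ha ha'
    exact hne (Subtype.ext (by rw [← ha.2, ← ha'.2]))
  have hdisj1 : Pairwise (Function.onFun Disjoint
      fun x : A => ⋃ y : B, {a : ℕ → ℕ+ | a i = (x : ℕ+) ∧ a j = (y : ℕ+)}) := by
    rintro x x' hne
    rw [Function.onFun, Set.disjoint_left]
    intro a ha ha'
    simp only [Set.mem_iUnion] at ha ha'
    obtain ⟨y, hy⟩ := ha
    obtain ⟨y', hy'⟩ := ha'
    exact hne (Subtype.ext (by rw [← hy.1, ← hy'.1]))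
  rw [hdecomp, measure_iUnion hdisj1
    (fun x => MeasurableSet.iUnion fun y => pair_meas _ _ _ _)]
  have hstep : ∀ x : A, m (⋃ y : B, {a : ℕ → ℕ+ | a i = (x : ℕ+) ∧ a j = (y : ℕ+)})
      = ENNReal.ofReal (p (x : ℕ+)) * ∑' y : B, ENNReal.ofReal (p (y : ℕ+)) := by
    intro x
    rw [measure_iUnion (hdisj2 x) (fun y => pair_meas _ _ _ _)]
    rw [tsum_congr (fun y : B => mPair hp hb hij (x : ℕ+) (y : ℕ+))]
    exact ENNReal.tsum_mul_left
  rw [tsum_congr hstep, ENNReal.tsum_mul_right]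
  rw [eval_preimage_measure hp hb i A, eval_preimage_measure hp hb j B]

end CFAux

namespace CFAux

open scoped Classical

def GN (lam0 : ℝ) (N : ℕ) : Set (ℕ → ℕ+) :=
  {a | ∀ n, N ≤ n → lam0 * n ≤ ∑ i ∈ Finset.range n, 2 * Real.log ((a i : ℕ) : ℝ)}

lemma diam_image_cylinder (n : ℕ) (w : Fin n → ℕ+) :
    EMetric.diam (cfVal '' cylinder n w)
      ≤ ENNReal.ofReal (((∏ k, ((w k : ℕ) : ℝ)) ^ 2)⁻¹) := by
  apply EMetric.diam_le
  rintro x ⟨a, ha, rfl⟩ y ⟨b, hb, rfl⟩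
  rw [edist_dist]
  apply ENNReal.ofReal_le_ofReal
  rw [Real.dist_eq]
  have hab : ∀ k < n, a k = b k := fun k hk => by
    rw [ha ⟨k, hk⟩, hb ⟨k, hk⟩]
  have hd := cfVal_dist n a b hab
  have hprod : (∏ k ∈ Finset.range n, ((a k : ℕ) : ℝ)) = ∏ k, ((w k : ℕ) : ℝ) := by
    rw [← Fin.prod_univ_eq_prod_range (fun k => ((a k : ℕ) : ℝ)) n]
    exact Finset.prod_congr rfl fun k _ => by rw [ha k]
  rwa [hprod] at hd

lemma univ_prod_coe_pos (n : ℕ) (w : Fin n → ℕ+) :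
    (0:ℝ) < ∏ k, ((w k : ℕ) : ℝ) := by
  apply Finset.prod_pos
  intro k _
  have := pnat_one_le (w k)
  linarith

lemma ZE_le {s0 : ℝ} (hs : 1/2 < s0) :
    (∑' y : ℕ+, ENNReal.ofReal (((y : ℕ) : ℝ) ^ (-(2 * s0))))
      ≤ ENNReal.ofReal (Real.exp (kappa s0)) := by
  have hrw : ∀ y : ℕ+, (((y : ℕ) : ℝ) ^ (-(2 * s0))) = ((((y : ℕ) : ℝ) ^ (2 * s0))⁻¹) :=
    fun y => Real.rpow_neg (by positivity) _
  calc (∑' y : ℕ+, ENNReal.ofReal (((y : ℕ) : ℝ) ^ (-(2 * s0))))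
      = ∑' y : ℕ+, ENNReal.ofReal ((((y : ℕ) : ℝ) ^ (2 * s0))⁻¹) := by
        exact tsum_congr fun y => by rw [hrw y]
    _ = ENNReal.ofReal (∑' y : ℕ+, (((y : ℕ) : ℝ) ^ (2 * s0))⁻¹) :=
        (ENNReal.ofReal_tsum_of_nonneg (fun y => by positivity) (summable_Z hs)).symm
    _ ≤ ENNReal.ofReal (Real.exp (kappa s0)) :=
        ENNReal.ofReal_le_ofReal (Z_le_exp_kappa hs)

lemma dimH_image_GN_le {s0 lam0 : ℝ} (hs0 : s0 ∈ Set.Ioo (1/2 : ℝ) 1) (hlam0 : 0 < lam0)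
    (N : ℕ) :
    dimH (cfVal '' GN lam0 N) ≤ ENNReal.ofReal (s0 + kappa s0 / lam0) := by
  have hκ := kappa_nonneg hs0.1
  have ht0 : 0 < s0 + kappa s0 / lam0 := by
    have : 0 ≤ kappa s0 / lam0 := div_nonneg hκ hlam0.le
    have h12 : (0:ℝ) < s0 := lt_trans (by norm_num) hs0.1
    linarith
  apply dimH_le
  intro d' hd'
  by_contra hcon
  push_neg at hcon
  have htd : s0 + kappa s0 / lam0 < (d' : ℝ) := by
    have h1 : ENNReal.ofReal (s0 + kappa s0 / lam0) < ENNReal.ofReal ((d' : ℝ)) := by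
      rwa [ENNReal.ofReal_coe_nnreal]
    exact (ENNReal.ofReal_lt_ofReal_iff_of_nonneg ht0.le).1 h1
  set s : ℝ := (d' : ℝ) with hsdef
  have hss0 : s0 < s := by
    have : 0 ≤ kappa s0 / lam0 := div_nonneg hκ hlam0.le
    linarith
  have hs_pos : 0 < s := lt_trans (lt_trans (by norm_num) hs0.1) hss0
  set Cov : ∀ n : ℕ, (Fin n → ℕ+) → Set ℝ := fun n w =>
    if lam0 * n ≤ ∑ k, 2 * Real.log ((w k : ℕ) : ℝ) then cfVal '' cylinder n w else ∅
    with hCov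
  set r : ℕ → ℝ≥0∞ := fun n => ENNReal.ofReal (Real.exp (-(lam0 * n))) with hrdef
  have hr : Tendsto r atTop (𝓝 0) := by
    have h1 : Tendsto (fun n : ℕ => lam0 * (n : ℝ)) atTop atTop :=
      Tendsto.const_mul_atTop hlam0 tendsto_natCast_atTop_atTop
    have h2 : Tendsto (fun n : ℕ => -(lam0 * (n : ℝ))) atTop atBot :=
      tendsto_neg_atTop_atBot.comp h1
    have h3 : Tendsto (fun n : ℕ => Real.exp (-(lam0 * (n : ℝ)))) atTop (𝓝 0) :=
      Real.tendsto_exp_atBot.comp h2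
    have h4 := ENNReal.tendsto_ofReal h3
    simpa [hrdef] using h4
  have hP2 : ∀ (n : ℕ) (w : Fin n → ℕ+),
      lam0 * n ≤ ∑ k, 2 * Real.log ((w k : ℕ) : ℝ) →
      Real.exp (lam0 * n) ≤ (∏ k, ((w k : ℕ) : ℝ)) ^ 2 := by
    intro n w hc
    have hP := univ_prod_coe_pos n w
    have h0 : (0:ℝ) < (∏ k, ((w k : ℕ) : ℝ)) ^ 2 := by positivity
    have hlog : Real.log ((∏ k, ((w k : ℕ) : ℝ)) ^ 2) = ∑ k, 2 * Real.log ((w k : ℕ) : ℝ) := by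
      rw [Real.log_pow]
      rw [Real.log_prod (fun k _ => by
        have := pnat_one_le (w k); intro hcon0; rw [hcon0] at this; linarith)]
      rw [Finset.mul_sum]
      norm_num
    calc Real.exp (lam0 * n) ≤ Real.exp (∑ k, 2 * Real.log ((w k : ℕ) : ℝ)) :=
          Real.exp_le_exp.2 hc
      _ = (∏ k, ((w k : ℕ) : ℝ)) ^ 2 := by rw [← hlog, Real.exp_log h0]
  have hdiam : ∀ (n : ℕ) (w : Fin n → ℕ+), EMetric.diam (Cov n w) ≤ r n := by
    intro n w
    by_cases hc : lam0 * n ≤ ∑ k, 2 * Real.log ((w k : ℕ) : ℝ)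
    · have hCw : Cov n w = cfVal '' cylinder n w := by rw [hCov]; simp only; rw [if_pos hc]
      rw [hCw]
      refine le_trans (diam_image_cylinder n w) (ENNReal.ofReal_le_ofReal ?_)
      have hP := univ_prod_coe_pos n w
      have h2 := hP2 n w hc
      calc ((∏ k, ((w k : ℕ) : ℝ)) ^ 2)⁻¹ ≤ (Real.exp (lam0 * n))⁻¹ :=
            inv_anti₀ (Real.exp_pos _) h2
        _ = Real.exp (-(lam0 * n)) := by rw [Real.exp_neg]
    · have hCw : Cov n w = ∅ := by rw [hCov]; simp only; rw [if_neg hc]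
      rw [hCw]
      simp [EMetric.diam]
  have hsub : ∀ᶠ n in atTop, cfVal '' GN lam0 N ⊆ ⋃ w : Fin n → ℕ+, Cov n w := by
    rw [eventually_atTop]
    refine ⟨N, fun n hn => ?_⟩
    rintro x ⟨a, ha, rfl⟩
    refine Set.mem_iUnion.2 ⟨fun k => a (k : ℕ), ?_⟩
    have hc : lam0 * n ≤ ∑ k : Fin n, 2 * Real.log (((a (k : ℕ) : ℕ)) : ℝ) := by
      have h1 := ha n hn
      rwa [← Fin.sum_univ_eq_sum_range (fun i => 2 * Real.log ((a i : ℕ) : ℝ)) n] at h1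
    have hCw : Cov n (fun k => a (k : ℕ)) = cfVal '' cylinder n (fun k => a (k : ℕ)) := by
      rw [hCov]; simp only; rw [if_pos hc]
    rw [hCw]
    exact ⟨a, fun k => rfl, rfl⟩
  have hcover := MeasureTheory.Measure.hausdorffMeasure_le_liminf_tsum s (cfVal '' GN lam0 N) r hr Cov
    (Filter.Eventually.of_forall hdiam) hsub
  set ρ : ℝ := Real.exp (kappa s0 - lam0 * (s - s0)) with hρ
  have hρ1 : ρ < 1 := by
    rw [hρ, Real.exp_lt_one_iff]
    have h1 : kappa s0 / lam0 < s - s0 := by linarith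
    have h2 := (div_lt_iff₀ hlam0).1 h1
    nlinarith
  have hterm : ∀ n, (∑' w : Fin n → ℕ+, EMetric.diam (Cov n w) ^ s)
      ≤ (ENNReal.ofReal ρ) ^ n := by
    intro n
    have hbound : ∀ w : Fin n → ℕ+, EMetric.diam (Cov n w) ^ s
        ≤ ENNReal.ofReal (Real.exp (-(lam0 * n) * (s - s0)))
          * ∏ k, ENNReal.ofReal (((w k : ℕ) : ℝ) ^ (-(2 * s0))) := by
      intro w
      by_cases hc : lam0 * n ≤ ∑ k, 2 * Real.log ((w k : ℕ) : ℝ)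
      · have hCw : Cov n w = cfVal '' cylinder n w := by rw [hCov]; simp only; rw [if_pos hc]
        rw [hCw]
        have hP := univ_prod_coe_pos n w
        set P : ℝ := ∏ k, ((w k : ℕ) : ℝ) with hPdef
        have hdle : EMetric.diam (cfVal '' cylinder n w) ^ s
            ≤ (ENNReal.ofReal ((P ^ 2)⁻¹)) ^ s :=
          ENNReal.rpow_le_rpow (diam_image_cylinder n w) hs_pos.le
        have hofreal : (ENNReal.ofReal ((P ^ 2)⁻¹)) ^ s = ENNReal.ofReal (((P ^ 2)⁻¹) ^ s) :=
          ENNReal.ofReal_rpow_of_pos (by positivity)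
        have hreal : ((P ^ 2)⁻¹) ^ s
            ≤ Real.exp (-(lam0 * n) * (s - s0)) * (P ^ 2) ^ (-s0) := by
          have hP2pos : (0:ℝ) < P ^ 2 := by positivity
          have e1 : ((P ^ 2)⁻¹) ^ s = (P ^ 2) ^ (-s) := by
            rw [Real.inv_rpow hP2pos.le, ← Real.rpow_neg hP2pos.le]
          have e2 : (P ^ 2) ^ (-s) = (P ^ 2) ^ (-(s - s0)) * (P ^ 2) ^ (-s0) := by
            rw [← Real.rpow_add hP2pos]
            ring_nf
          have e3 : (P ^ 2) ^ (-(s - s0)) ≤ (Real.exp (lam0 * n)) ^ (-(s - s0)) :=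
            Real.rpow_le_rpow_of_nonpos (Real.exp_pos _) (hP2 n w hc) (by linarith)
          have e4 : (Real.exp (lam0 * n)) ^ (-(s - s0)) = Real.exp (-(lam0 * n) * (s - s0)) := by
            rw [← Real.exp_mul]
            ring_nf
          rw [e1, e2]
          apply mul_le_mul_of_nonneg_right _ (Real.rpow_nonneg hP2pos.le _)
          rw [← e4]
          exact e3
        have hsplit : (P ^ 2) ^ (-s0) = ∏ k, (((w k : ℕ) : ℝ) ^ (-(2 * s0))) := by
          rw [← Real.rpow_natCast P 2, ← Real.rpow_mul hP.le]
          have : ((2:ℕ):ℝ) * (-s0) = -(2 * s0) := by push_cast; ring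
          rw [this, hPdef]
          rw [← Real.finset_prod_rpow _ _ (fun k _ => by positivity) _]
        calc EMetric.diam (cfVal '' cylinder n w) ^ s
            ≤ ENNReal.ofReal (((P ^ 2)⁻¹) ^ s) := by rw [← hofreal]; exact hdle
          _ ≤ ENNReal.ofReal (Real.exp (-(lam0 * n) * (s - s0)) * (P ^ 2) ^ (-s0)) :=
              ENNReal.ofReal_le_ofReal hreal
          _ = ENNReal.ofReal (Real.exp (-(lam0 * n) * (s - s0)))
              * ENNReal.ofReal ((P ^ 2) ^ (-s0)) := by
              rw [ENNReal.ofReal_mul (Real.exp_pos _).le]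
          _ = ENNReal.ofReal (Real.exp (-(lam0 * n) * (s - s0)))
              * ∏ k, ENNReal.ofReal (((w k : ℕ) : ℝ) ^ (-(2 * s0))) := by
              rw [hsplit, ENNReal.ofReal_prod_of_nonneg
                (fun k _ => Real.rpow_nonneg (by positivity) _)]
      · have hCw : Cov n w = ∅ := by rw [hCov]; simp only; rw [if_neg hc]
        rw [hCw]
        rw [EMetric.diam, Metric.ediam_empty, ENNReal.zero_rpow_of_pos hs_pos]
        exact zero_le
    calc (∑' w : Fin n → ℕ+, EMetric.diam (Cov n w) ^ s)
        ≤ ∑' w : Fin n → ℕ+, ENNReal.ofReal (Real.exp (-(lam0 * n) * (s - s0)))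
          * ∏ k, ENNReal.ofReal (((w k : ℕ) : ℝ) ^ (-(2 * s0))) :=
          ENNReal.tsum_le_tsum hbound
      _ = ENNReal.ofReal (Real.exp (-(lam0 * n) * (s - s0)))
          * ∑' w : Fin n → ℕ+, ∏ k, ENNReal.ofReal (((w k : ℕ) : ℝ) ^ (-(2 * s0))) :=
          ENNReal.tsum_mul_left
      _ = ENNReal.ofReal (Real.exp (-(lam0 * n) * (s - s0)))
          * ∏ k : Fin n, ∑' y : ℕ+, ENNReal.ofReal (((y : ℕ) : ℝ) ^ (-(2 * s0))) := by
          rw [tsum_pi_prod n (fun k y => ENNReal.ofReal (((y : ℕ) : ℝ) ^ (-(2 * s0))))]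
      _ = ENNReal.ofReal (Real.exp (-(lam0 * n) * (s - s0)))
          * (∑' y : ℕ+, ENNReal.ofReal (((y : ℕ) : ℝ) ^ (-(2 * s0)))) ^ n := by
          rw [Finset.prod_const, Finset.card_univ, Fintype.card_fin]
      _ ≤ ENNReal.ofReal (Real.exp (-(lam0 * n) * (s - s0)))
          * (ENNReal.ofReal (Real.exp (kappa s0))) ^ n := by
          apply mul_le_mul_right
          exact pow_le_pow_left' (ZE_le hs0.1) n
      _ = (ENNReal.ofReal ρ) ^ n := by
          rw [← ENNReal.ofReal_pow (Real.exp_pos _).le,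
            ← ENNReal.ofReal_mul (Real.exp_pos _).le,
            ← ENNReal.ofReal_pow (Real.exp_pos _).le]
          congr 1
          rw [← Real.exp_nat_mul, ← Real.exp_add, ← Real.exp_nat_mul]
          congr 1
          push_cast
          ring
  have hliminf : liminf (fun n => ∑' w : Fin n → ℕ+, EMetric.diam (Cov n w) ^ s) atTop
      ≤ (0 : ℝ≥0∞) := by
    have h1 : liminf (fun n => ∑' w : Fin n → ℕ+, EMetric.diam (Cov n w) ^ s) atTop
        ≤ liminf (fun n => (ENNReal.ofReal ρ) ^ n) atTop :=
      liminf_le_liminf (Filter.Eventually.of_forall hterm)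
    have h2 : Tendsto (fun n => (ENNReal.ofReal ρ) ^ n) atTop (𝓝 0) :=
      ENNReal.tendsto_pow_atTop_nhds_zero_of_lt_one (by
        rw [← ENNReal.ofReal_one]
        exact (ENNReal.ofReal_lt_ofReal_iff one_pos).2 hρ1)
    rw [h2.liminf_eq] at h1
    exact h1
  have hzero : μH[s] (cfVal '' GN lam0 N) = 0 :=
    le_antisymm (hcover.trans hliminf) zero_le
  rw [hzero] at hd'
  exact ENNReal.zero_ne_top hd'

end CFAux


namespace CFAux

open ProbabilityTheory

variable {p : ℕ+ → ℝ} {m : Measure (ℕ → ℕ+)}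

lemma psi_lt_one : psi < 1 := by
  rw [psi]
  have h5 : Real.sqrt 5 < 3 := by
    rw [show (3:ℝ) = Real.sqrt 9 by rw [show (9:ℝ) = 3^2 by norm_num, Real.sqrt_sq]; norm_num]
    exact Real.sqrt_lt_sqrt (by norm_num) (by norm_num)
  have h1 : (Real.sqrt 5 - 1) / 2 < 1 := by linarith
  calc Real.sqrt ((Real.sqrt 5 - 1) / 2) < Real.sqrt 1 :=
        Real.sqrt_lt_sqrt
          (by nlinarith [Real.sq_sqrt (show (0:ℝ) ≤ 5 by norm_num), Real.sqrt_nonneg 5]) h1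
    _ = 1 := Real.sqrt_one

lemma psi_nonneg : 0 ≤ psi := Real.sqrt_nonneg _

lemma indep_eval (hp : IsProbVec p) (hb : IsBernoulli p m) {i j : ℕ} (hij : i ≠ j) :
    IndepFun (fun a : ℕ → ℕ+ => a i) (fun a : ℕ → ℕ+ => a j) m := by
  rcases hij.lt_or_gt with h | h
  · rw [indepFun_iff_measure_inter_preimage_eq_mul]
    intro A B _ _
    exact pair_preimage_measure hp hb h A B
  · have : IndepFun (fun a : ℕ → ℕ+ => a j) (fun a : ℕ → ℕ+ => a i) m := by
      rw [indepFun_iff_measure_inter_preimage_eq_mul]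
      intro A B _ _
      exact pair_preimage_measure hp hb h A B
    exact this.symm

lemma identDistrib_eval (hp : IsProbVec p) (hb : IsBernoulli p m) (i : ℕ) :
    IdentDistrib (fun a : ℕ → ℕ+ => a i) (fun a : ℕ → ℕ+ => a 0) m m := by
  refine ⟨(measurable_pi_apply i).aemeasurable, (measurable_pi_apply 0).aemeasurable, ?_⟩
  apply Measure.ext
  intro S hS
  rw [Measure.map_apply (measurable_pi_apply i) hS, Measure.map_apply (measurable_pi_apply 0) hS,
    eval_preimage_measure hp hb i S, eval_preimage_measure hp hb 0 S]

lemma integral_eval (hp : IsProbVec p) (hmprob : IsProbabilityMeasure m)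
    (hb : IsBernoulli p m) (g : ℕ+ → ℝ) (hint : Integrable (fun a : ℕ → ℕ+ => g (a 0)) m) :
    ∫ a, g (a 0) ∂m = ∑' x : ℕ+, p x * g x := by
  have hmap : ∫ a, g (a 0) ∂m = ∫ y, g y ∂(m.map (fun a : ℕ → ℕ+ => a 0)) := by
    rw [integral_map (measurable_pi_apply 0).aemeasurable
      (measurable_pnat g).aestronglyMeasurable]
  have hgint : Integrable g (m.map (fun a : ℕ → ℕ+ => a 0)) := by
    rw [integrable_map_measure (measurable_pnat g).aestronglyMeasurable
      (measurable_pi_apply 0).aemeasurable]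
    exact hint
  rw [hmap, integral_countable' hgint]
  apply tsum_congr
  intro x
  have h1 : (m.map (fun a : ℕ → ℕ+ => a 0)) {x} = ENNReal.ofReal (p x) := by
    rw [Measure.map_apply (measurable_pi_apply 0) (pnat_measurableSet {x})]
    exact mSingle hp hb 0 x
  rw [measureReal_def, h1, ENNReal.toReal_ofReal (hp.1 x), smul_eq_mul]

lemma slln (hp : IsProbVec p) (hmprob : IsProbabilityMeasure m) (hb : IsBernoulli p m)
    (g : ℕ+ → ℝ) (hg0 : ∀ x, 0 ≤ g x) (C : ℝ) (hgC : ∀ x, g x ≤ C) :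
    ∀ᵐ a ∂m, Tendsto (fun n : ℕ => (∑ i ∈ Finset.range n, g (a i)) / n) atTop
      (𝓝 (∑' x : ℕ+, p x * g x)) := by
  set X : ℕ → (ℕ → ℕ+) → ℝ := fun i a => g (a i) with hX
  have hXm : ∀ i, Measurable (X i) := fun i =>
    (measurable_pnat g).comp (measurable_pi_apply i)
  have hint : Integrable (X 0) m := by
    apply Integrable.mono' (integrable_const C) (hXm 0).aestronglyMeasurable
    apply Filter.Eventually.of_forall
    intro a
    rw [Real.norm_eq_abs, abs_of_nonneg (hg0 _)]
    exact hgC _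
  have hindep : Pairwise (Function.onFun (IndepFun · · m) X) := fun i j hij =>
    IndepFun.comp (indep_eval hp hb hij) (measurable_pnat g) (measurable_pnat g)
  have hident : ∀ i, IdentDistrib (X i) (X 0) m m := fun i =>
    (identDistrib_eval hp hb i).comp (measurable_pnat g)
  have h := strong_law_ae_real X hint hindep hident
  have hEY : ∫ a, X 0 a ∂m = ∑' x : ℕ+, p x * g x := integral_eval hp hmprob hb g hint
  rw [hEY] at h
  exact h

lemma EY_lower (hp : IsProbVec p) (hmono : Antitone p) (M : ℕ+)
    {ε0 : ℝ} (hε : 0 < ε0) (hp1 : p 1 ≤ psi) (hmin : min (p 1) (p 2) ≤ ε0) :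
    2 * Real.log ((M : ℕ) : ℝ) * (1 - psi - ((M : ℕ) : ℝ) * ε0)
      ≤ ∑' x : ℕ+, p x * min (2 * Real.log ((x : ℕ) : ℝ)) (2 * Real.log ((M : ℕ) : ℝ)) := by
  have hM1 : (1:ℝ) ≤ ((M : ℕ) : ℝ) := pnat_one_le M
  set C := 2 * Real.log ((M : ℕ) : ℝ) with hC
  have hC0 : 0 ≤ C := by
    have := Real.log_nonneg hM1
    rw [hC]; linarith
  set g := fun x : ℕ+ => min (2 * Real.log ((x : ℕ) : ℝ)) C with hg
  have hg0 : ∀ x, 0 ≤ g x := by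
    intro x
    apply le_min _ hC0
    have := Real.log_nonneg (pnat_one_le x)
    linarith
  have hpC : Summable (fun x : ℕ+ => p x * C) := hp.2.summable.mul_right C
  have Sg : Summable (fun x : ℕ+ => p x * g x) := by
    apply Summable.of_nonneg_of_le (fun x => mul_nonneg (hp.1 x) (hg0 x)) _ hpC
    intro x
    exact mul_le_mul_of_nonneg_left (min_le_right _ _) (hp.1 x)
  set q := fun x : ℕ+ => if M < x then p x * C else 0 with hq
  have hq0 : ∀ x, 0 ≤ q x := by
    intro x
    rw [hq]
    by_cases h : M < x
    · simp only [if_pos h]; exact mul_nonneg (hp.1 x) hC0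
    · simp only [if_neg h]; exact le_rfl
  have Sq : Summable q := by
    apply Summable.of_nonneg_of_le hq0 _ hpC
    intro x
    rw [hq]
    by_cases h : M < x
    · simp only [if_pos h]; exact le_rfl
    · simp only [if_neg h]; exact mul_nonneg (hp.1 x) hC0
  have hqg : ∀ x, q x ≤ p x * g x := by
    intro x
    rw [hq]
    by_cases h : M < x
    · simp only [if_pos h]
      have hle : ((M : ℕ) : ℝ) ≤ ((x : ℕ) : ℝ) := by exact_mod_cast (le_of_lt h)
      have hlog : Real.log ((M : ℕ) : ℝ) ≤ Real.log ((x : ℕ) : ℝ) :=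
        Real.log_le_log (by linarith) hle
      have : g x = C := min_eq_right (by rw [hC]; linarith)
      rw [this]
    · simp only [if_neg h]
      exact mul_nonneg (hp.1 x) (hg0 x)
  have hqtsum : ∑' x, q x = (1 - ∑ x ∈ Finset.Icc 1 M, p x) * C := by
    set r := fun x : ℕ+ => if x ≤ M then p x else 0 with hr
    have Sr : Summable r := by
      apply Summable.of_nonneg_of_le _ _ hp.2.summable
      · intro x
        rw [hr]
        by_cases h : x ≤ M
        · simp only [if_pos h]; exact hp.1 x
        · simp only [if_neg h]; exact le_rfl
      · intro x
        rw [hr]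
        by_cases h : x ≤ M
        · simp only [if_pos h]; exact le_rfl
        · simp only [if_neg h]; exact hp.1 x
    have hqr : ∀ x, q x = (p x - r x) * C := by
      intro x
      simp only [hq, hr]
      by_cases h : M < x
      · rw [if_pos h, if_neg (not_le.2 h)]
        ring
      · rw [if_neg h, if_pos (not_lt.1 h)]
        ring
    have hrsum : ∑' x, r x = ∑ x ∈ Finset.Icc 1 M, p x := by
      rw [tsum_eq_sum (s := Finset.Icc 1 M) ?_]
      · apply Finset.sum_congr rfl
        intro x hx
        simp only [hr]
        exact if_pos (Finset.mem_Icc.1 hx).2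
      · intro b hb
        simp only [hr]
        rw [if_neg]
        intro hle
        exact hb (Finset.mem_Icc.2 ⟨b.one_le, hle⟩)
    calc ∑' x, q x = ∑' x, (p x - r x) * C := tsum_congr hqr
      _ = (∑' x, (p x - r x)) * C := by rw [tsum_mul_right]
      _ = (∑' x, p x - ∑' x, r x) * C := by rw [Summable.tsum_sub hp.2.summable Sr]
      _ = (1 - ∑ x ∈ Finset.Icc 1 M, p x) * C := by rw [hp.2.tsum_eq, hrsum]
  have hsum_le : ∑ x ∈ Finset.Icc 1 M, p x ≤ psi + ((M : ℕ) : ℝ) * ε0 := by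
    rcases min_le_iff.1 hmin with h1 | h2
    · have hbound : ∀ x ∈ Finset.Icc 1 M, p x ≤ ε0 :=
        fun x _ => le_trans (hmono x.one_le) h1
      have hcard : (Finset.Icc (1:ℕ+) M).card = (M : ℕ) := by
        rw [PNat.card_Icc]; simp
      have hsum1 := Finset.sum_le_card_nsmul _ _ _ hbound
      rw [hcard, nsmul_eq_mul] at hsum1
      linarith [psi_nonneg]
    · have hm1 : (1 : ℕ+) ∈ Finset.Icc 1 M := Finset.mem_Icc.2 ⟨le_rfl, M.one_le⟩
      rw [← Finset.add_sum_erase _ p hm1]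
      have hbound : ∀ x ∈ (Finset.Icc 1 M).erase 1, p x ≤ ε0 := by
        intro x hx
        have hx1 : x ≠ 1 := (Finset.mem_erase.1 hx).1
        have h2x : (2 : ℕ+) ≤ x := by
          have : (1 : ℕ+) < x := lt_of_le_of_ne x.one_le (Ne.symm hx1)
          exact this
        exact le_trans (hmono h2x) h2
      have hsum2 := Finset.sum_le_card_nsmul _ _ _ hbound
      have hcard2 : (((Finset.Icc 1 M).erase 1).card : ℝ) ≤ ((M : ℕ) : ℝ) := by
        have h1 : ((Finset.Icc 1 M).erase 1).card ≤ (Finset.Icc 1 M).card :=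
          Finset.card_le_card (Finset.erase_subset _ _)
        have h2' : (Finset.Icc 1 M).card = (M : ℕ) := by
          rw [PNat.card_Icc]; simp
        have : ((Finset.Icc 1 M).erase 1).card ≤ (M : ℕ) := by omega
        exact_mod_cast this
      rw [nsmul_eq_mul] at hsum2
      have : (∑ x ∈ (Finset.Icc 1 M).erase 1, p x) ≤ ((M : ℕ) : ℝ) * ε0 :=
        le_trans hsum2 (mul_le_mul_of_nonneg_right hcard2 hε.le)
      linarith
  calc C * (1 - psi - ((M : ℕ) : ℝ) * ε0)
      ≤ C * (1 - ∑ x ∈ Finset.Icc 1 M, p x) :=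
        mul_le_mul_of_nonneg_left (by linarith) hC0
    _ = (1 - ∑ x ∈ Finset.Icc 1 M, p x) * C := mul_comm _ _
    _ = ∑' x, q x := hqtsum.symm
    _ ≤ ∑' x, p x * g x := Summable.tsum_le_tsum hqg Sq Sg

end CFAux


/-- Fix `1/2 < s₀ < 1` and `λ₀ > 0` with `s₀ + κ(s₀)/λ₀ < 1`.  Then there is `ε₀ > 0` such
that every probability vector `p` with decreasing entries and finite entropy which satisfies
`p₁ ≤ ψ` and `min(p₁, p₂) ≤ ε₀` has `dim μ_p ≤ s₀ + κ(s₀)/λ₀`. -/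
theorem dim_bound_of_not_hyp
    (s0 lam0 : ℝ) (hs0 : s0 ∈ Set.Ioo (1 / 2 : ℝ) 1) (hlam0 : 0 < lam0)
    (hlt : s0 + kappa s0 / lam0 < 1) :
    ∃ ε0 : ℝ, 0 < ε0 ∧
      ∀ (p : ℕ+ → ℝ) (m : Measure (ℕ → ℕ+)),
        IsProbVec p → IsProbabilityMeasure m → IsBernoulli p m →
        Antitone p →
        Summable (fun n : ℕ+ => p n * Real.log (p n)) →
        p 1 ≤ psi → min (p 1) (p 2) ≤ ε0 →
          dimMeasure (m.map cfVal) ≤ ENNReal.ofReal (s0 + kappa s0 / lam0) := by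
  have hψ1 := CFAux.psi_lt_one
  have hψ0 := CFAux.psi_nonneg
  set δ := 1 - psi with hδdef
  have hδ : 0 < δ := by rw [hδdef]; linarith
  set M : ℕ+ := ⟨⌈Real.exp ((lam0 + 1) / δ)⌉₊ + 1, Nat.succ_pos _⟩ with hMdef
  have hM1 : (1:ℝ) ≤ ((M : ℕ) : ℝ) := CFAux.pnat_one_le M
  have hMreal : Real.exp ((lam0 + 1) / δ) ≤ ((M : ℕ) : ℝ) := by
    have h1 := Nat.le_ceil (Real.exp ((lam0 + 1) / δ))
    have h2 : ((⌈Real.exp ((lam0 + 1) / δ)⌉₊ : ℕ) : ℝ) ≤ ((M : ℕ) : ℝ) := by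
      have : (⌈Real.exp ((lam0 + 1) / δ)⌉₊ : ℕ) ≤ (M : ℕ) := by
        rw [hMdef]
        exact Nat.le_succ _
      exact_mod_cast this
    linarith
  have hlogM : (lam0 + 1) / δ ≤ Real.log ((M : ℕ) : ℝ) := by
    calc (lam0 + 1) / δ = Real.log (Real.exp ((lam0 + 1) / δ)) := (Real.log_exp _).symm
      _ ≤ Real.log ((M : ℕ) : ℝ) := Real.log_le_log (Real.exp_pos _) hMreal
  set ε0 := δ / (2 * ((M : ℕ) : ℝ)) with hε0def
  have hε0 : 0 < ε0 := by
    apply div_pos hδ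
    linarith
  refine ⟨ε0, hε0, ?_⟩
  intro p m hp hmprob hb hmono hent hp1 hmin
  haveI := hmprob
  set C := 2 * Real.log ((M : ℕ) : ℝ) with hCdef
  set g : ℕ+ → ℝ := fun x => min (2 * Real.log ((x : ℕ) : ℝ)) C with hgdef
  have hg0 : ∀ x, 0 ≤ g x := by
    intro x
    apply le_min
    · have := Real.log_nonneg (CFAux.pnat_one_le x); linarith
    · have := Real.log_nonneg hM1; rw [hCdef]; linarith
  have hgC : ∀ x, g x ≤ C := fun x => min_le_right _ _
  have hEY : lam0 + 1 ≤ ∑' x : ℕ+, p x * g x := by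
    have h1 := CFAux.EY_lower hp hmono M hε0 hp1 hmin
    have hMε : ((M : ℕ) : ℝ) * ε0 = δ / 2 := by
      rw [hε0def]
      field_simp
    have e1 : 1 - psi - ((M : ℕ) : ℝ) * ε0 = δ / 2 := by rw [hMε, hδdef]; ring
    rw [e1] at h1
    have h2 : lam0 + 1 ≤ Real.log ((M : ℕ) : ℝ) * δ := by
      have := (div_le_iff₀ hδ).1 hlogM
      linarith
    have h3 : 2 * Real.log ((M : ℕ) : ℝ) * (δ / 2) = Real.log ((M : ℕ) : ℝ) * δ := by ring
    rw [h3] at h1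
    exact le_trans h2 h1
  have hae := CFAux.slln hp hmprob hb g hg0 C hgC
  set G := {a : ℕ → ℕ+ | ∀ᶠ n : ℕ in atTop,
    lam0 * n ≤ ∑ i ∈ Finset.range n, 2 * Real.log ((a i : ℕ) : ℝ)} with hGdef
  have hGae : ∀ᵐ a ∂m, a ∈ G := by
    filter_upwards [hae] with a ha
    have hgt : lam0 < ∑' x : ℕ+, p x * g x := by linarith
    have h1 : ∀ᶠ n : ℕ in atTop,
        lam0 < (∑ i ∈ Finset.range n, g (a i)) / n :=
      ha.eventually (eventually_gt_nhds hgt)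
    show ∀ᶠ n : ℕ in atTop, lam0 * n ≤ ∑ i ∈ Finset.range n, 2 * Real.log ((a i : ℕ) : ℝ)
    filter_upwards [h1, Filter.eventually_ge_atTop 1] with n hn1 hn2
    have hnpos : (0:ℝ) < (n : ℝ) := by exact_mod_cast hn2
    rw [lt_div_iff₀ hnpos] at hn1
    have h4 : ∑ i ∈ Finset.range n, g (a i)
        ≤ ∑ i ∈ Finset.range n, 2 * Real.log ((a i : ℕ) : ℝ) :=
      Finset.sum_le_sum (fun i _ => min_le_left _ _)
    linarith
  have hmG : m G = 1 := by
    have hc : m Gᶜ = 0 := by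
      rw [ae_iff] at hGae
      exact hGae
    have hle : (1:ℝ≥0∞) ≤ m G := by
      have h1 : m Set.univ ≤ m G + m Gᶜ := by
        rw [← Set.union_compl_self G]
        exact measure_union_le _ _
      rw [measure_univ, hc, add_zero] at h1
      exact h1
    exact le_antisymm prob_le_one hle
  have haem : AEMeasurable cfVal m := CFAux.measurable_cfVal.aemeasurable
  haveI hprobmap : IsProbabilityMeasure (m.map cfVal) := Measure.isProbabilityMeasure_map haem
  have hA : (m.map cfVal) (cfVal '' G) = 1 := by
    apply le_antisymm prob_le_one
    calc (1:ℝ≥0∞) = m G := hmG.symm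
      _ ≤ (m.map cfVal) (cfVal '' G) := Measure.le_map_apply_image haem G
  have hdim : dimH (cfVal '' G) ≤ ENNReal.ofReal (s0 + kappa s0 / lam0) := by
    have hsub : cfVal '' G ⊆ ⋃ N : ℕ, cfVal '' CFAux.GN lam0 N := by
      rintro x ⟨a, ha, rfl⟩
      obtain ⟨N, hN⟩ := Filter.eventually_atTop.1 ha
      exact Set.mem_iUnion.2 ⟨N, ⟨a, hN, rfl⟩⟩
    calc dimH (cfVal '' G) ≤ dimH (⋃ N : ℕ, cfVal '' CFAux.GN lam0 N) := dimH_mono hsub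
      _ = ⨆ N : ℕ, dimH (cfVal '' CFAux.GN lam0 N) := dimH_iUnion _
      _ ≤ ENNReal.ofReal (s0 + kappa s0 / lam0) :=
          iSup_le fun N => CFAux.dimH_image_GN_le hs0 hlam0 N
  rw [show dimMeasure (m.map cfVal)
      = ⨅ (A : Set ℝ) (_ : (m.map cfVal) A = 1), dimH A from rfl]
  exact le_trans (iInf₂_le (cfVal '' G) hA) hdim
end

section
/- Let N ∈ ℕ and 0 < ε0 < (1−ψ)/(2N). For every probability vector p with decreasing entries such that p_1 ≤ ψ and p_2 ≤ ε0, the Lyapunov exponent satisfies ∫ log|T′| dμ_p ≥ (1−ψ)·log N. -/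
open MeasureTheory Filter Set
open scoped ENNReal Topology

/-! ### Auxiliary development -/

/-- Partial continued fraction maps: `cfA n a x = 1/(a 0 + 1/(a 1 + ⋯ + 1/(a (n-1) + x)))`. -/
noncomputable def cfA : ℕ → (ℕ → ℕ+) → ℝ → ℝ
  | 0, _, x => x
  | n + 1, a, x => (((a 0 : ℕ) : ℝ) + cfA n (fun k => a (k + 1)) x)⁻¹

lemma one_le_digit (a : ℕ → ℕ+) (j : ℕ) : (1 : ℝ) ≤ ((a j : ℕ) : ℝ) := by
  exact_mod_cast (a j).one_le

lemma cfA_mem {x : ℝ} (hx : x ∈ Icc (0:ℝ) 1) : ∀ n (a : ℕ → ℕ+), cfA n a x ∈ Icc (0:ℝ) 1 := by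
  intro n
  induction n with
  | zero => intro a; exact hx
  | succ n ih =>
    intro a
    have ht := ih (fun k => a (k + 1))
    have hb := one_le_digit a 0
    simp only [cfA]
    constructor
    · have : (0:ℝ) < ((a 0 : ℕ):ℝ) + cfA n (fun k => a (k+1)) x := by linarith [ht.1]
      positivity
    · calc (((a 0 : ℕ):ℝ) + cfA n (fun k => a (k+1)) x)⁻¹ ≤ 1⁻¹ :=
          inv_anti₀ one_pos (by linarith [ht.1])
        _ = 1 := inv_one

lemma cfA_zero : ∀ n (a : ℕ → ℕ+), cfA n a 0 = cfApprox n a := by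
  intro n
  induction n with
  | zero => intro a; rfl
  | succ n ih => intro a; simp only [cfA, cfApprox, ih]

lemma cfA_lip : ∀ n (a : ℕ → ℕ+) (x y : ℝ), x ∈ Icc (0:ℝ) 1 → y ∈ Icc (0:ℝ) 1 →
    |cfA n a x - cfA n a y| ≤ (1/2 : ℝ) ^ (n - 1) * |x - y| := by
  intro n
  induction n using Nat.strong_induction_on with
  | _ n ih =>
    match n with
    | 0 => intro a x y hx hy; simp [cfA]
    | 1 =>
      intro a x y hx hy
      simp only [cfA]
      have hb := one_le_digit a 0
      have hbx : ((a 0 : ℕ) : ℝ) + x ≠ 0 := by nlinarith [hx.1]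
      have hby : ((a 0 : ℕ) : ℝ) + y ≠ 0 := by nlinarith [hy.1]
      rw [inv_sub_inv hbx hby]
      have : ((a 0:ℕ):ℝ) + y - (((a 0:ℕ):ℝ) + x) = y - x := by ring
      rw [this, abs_div]
      calc |y - x| / |(((a 0:ℕ):ℝ) + x) * (((a 0:ℕ):ℝ) + y)| ≤ |y - x| := by
            apply div_le_self (abs_nonneg _)
            rw [abs_mul]
            have h1 : (1:ℝ) ≤ |((a 0:ℕ):ℝ) + x| := by
              rw [abs_of_nonneg (by linarith [hx.1])]; linarith [hx.1]
            have h2 : (1:ℝ) ≤ |((a 0:ℕ):ℝ) + y| := by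
              rw [abs_of_nonneg (by linarith [hy.1])]; linarith [hy.1]
            nlinarith
        _ = |x - y| := abs_sub_comm _ _
        _ ≤ 1 * |x - y| := by rw [one_mul]
    | (n + 2) =>
      intro a x y hx hy
      have hIH := ih n (by omega) (fun k => a (k + 2)) x y hx hy
      -- abbreviations
      set b : ℝ := ((a 0 : ℕ) : ℝ) with hbdef
      set c : ℝ := ((a 1 : ℕ) : ℝ) with hcdef
      have hb : (1:ℝ) ≤ b := one_le_digit a 0
      have hc : (1:ℝ) ≤ c := one_le_digit a 1
      have hshift : (fun k => (fun j => a (j + 1)) (k + 1)) = fun k => a (k + 2) := by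
        funext k; simp [add_assoc]
      have hexp : cfA (n+2) a x = (b + (c + cfA n (fun k => a (k+2)) x)⁻¹)⁻¹ := by
        simp only [cfA, hshift]; rfl
      have hexpy : cfA (n+2) a y = (b + (c + cfA n (fun k => a (k+2)) y)⁻¹)⁻¹ := by
        simp only [cfA, hshift]; rfl
      set s := cfA n (fun k => a (k+2)) x with hs
      set t := cfA n (fun k => a (k+2)) y with ht
      have hsm := cfA_mem hx n (fun k => a (k+2))
      have htm := cfA_mem hy n (fun k => a (k+2))
      have hcs : (0:ℝ) < c + s := by linarith [hsm.1]
      have hct : (0:ℝ) < c + t := by linarith [htm.1]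
      set u := (c + s)⁻¹ with hu
      set v := (c + t)⁻¹ with hv
      have hu0 : 0 < u := by positivity
      have hv0 : 0 < v := by positivity
      have hbu : (0:ℝ) < b + u := by linarith
      have hbv : (0:ℝ) < b + v := by linarith
      -- key contraction bound
      have key : |(b + u)⁻¹ - (b + v)⁻¹| ≤ (1/4 : ℝ) * |s - t| := by
        have e1 : (b + u)⁻¹ - (b + v)⁻¹ = (v - u) / ((b + u) * (b + v)) := by
          rw [inv_sub_inv hbu.ne' hbv.ne']; ring_nf
        have e2 : v - u = (s - t) / ((c + s) * (c + t)) := by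
          rw [hu, hv, inv_sub_inv hct.ne' hcs.ne']; ring_nf
        rw [e1, e2]
        have hD1 : (2:ℝ) ≤ (b + u) * (c + s) := by
          have : u * (c + s) = 1 := inv_mul_cancel₀ hcs.ne'
          nlinarith [hsm.1]
        have hD2 : (2:ℝ) ≤ (b + v) * (c + t) := by
          have : v * (c + t) = 1 := inv_mul_cancel₀ hct.ne'
          nlinarith [htm.1]
        have hprod : (4:ℝ) ≤ ((c + s) * (c + t)) * ((b + u) * (b + v)) := by nlinarith
        rw [div_div, abs_div]
        have hDpos : (0:ℝ) < (c + s) * (c + t) * ((b + u) * (b + v)) := by positivity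
        rw [abs_of_pos hDpos, div_le_iff₀ hDpos]
        nlinarith [abs_nonneg (s - t)]
      rw [hexp, hexpy]
      calc |(b + u)⁻¹ - (b + v)⁻¹| ≤ (1/4 : ℝ) * |s - t| := key
        _ ≤ (1/4 : ℝ) * ((1/2:ℝ) ^ (n-1) * |x - y|) := by
            apply mul_le_mul_of_nonneg_left hIH (by norm_num)
        _ = (1/2:ℝ) ^ ((n-1) + 2) * |x - y| := by ring
        _ ≤ (1/2:ℝ) ^ ((n+2) - 1) * |x - y| := by
            apply mul_le_mul_of_nonneg_right _ (abs_nonneg _)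
            apply pow_le_pow_of_le_one (by norm_num) (by norm_num) (by omega)

lemma cfApprox_mem (n : ℕ) (a : ℕ → ℕ+) : cfApprox n a ∈ Icc (0:ℝ) 1 := by
  rw [← cfA_zero]
  exact cfA_mem (by norm_num) n a

lemma drop_shift (n : ℕ) (a : ℕ → ℕ+) :
    (fun k => (fun j => a (j + 1)) (k + n)) = fun k => a (k + (n + 1)) := by
  funext k; simp [add_assoc]

lemma cfApprox_decomp : ∀ (n k : ℕ) (a : ℕ → ℕ+),
    cfApprox (n + k) a = cfA n a (cfApprox k (fun j => a (j + n))) := by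
  intro n
  induction n with
  | zero => intro k a; simp [cfA]
  | succ n ih =>
    intro k a
    have : n + 1 + k = (n + k) + 1 := by omega
    rw [this]
    show (((a 0 : ℕ):ℝ) + cfApprox (n + k) (fun j => a (j + 1)))⁻¹ = _
    rw [ih k (fun j => a (j + 1))]
    simp only [cfA, drop_shift]

lemma dist_cfApprox (n : ℕ) (a : ℕ → ℕ+) :
    dist (cfApprox n a) (cfApprox (n + 1) a) ≤ 2 * (1/2 : ℝ) ^ n := by
  have h1 : cfApprox (n + 1) a = cfA n a (cfApprox 1 (fun j => a (j + n))) :=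
    cfApprox_decomp n 1 a
  have h0 : cfApprox n a = cfA n a 0 := by rw [cfA_zero]
  rw [Real.dist_eq, h0, h1, abs_sub_comm]
  have hm := cfApprox_mem 1 (fun j => a (j + n))
  calc |cfA n a (cfApprox 1 fun j => a (j + n)) - cfA n a 0| ≤
        (1/2:ℝ) ^ (n - 1) * |cfApprox 1 (fun j => a (j + n)) - 0| :=
          cfA_lip n a _ 0 hm (by norm_num)
    _ ≤ (1/2:ℝ) ^ (n - 1) * 1 := by
        apply mul_le_mul_of_nonneg_left _ (by positivity)
        rw [sub_zero, abs_of_nonneg hm.1]; exact hm.2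
    _ = (1/2:ℝ) ^ (n - 1) := mul_one _
    _ ≤ 2 * (1/2:ℝ) ^ n := by
        have : (1/2:ℝ) ^ n ≤ (1/2:ℝ) ^ (n - 1) := by
          apply pow_le_pow_of_le_one (by norm_num) (by norm_num) (by omega)
        have h2 : (1/2:ℝ) ^ (n - 1) ≤ 2 * (1/2:ℝ) ^ n := by
          have : (1/2:ℝ) ^ ((n-1) + 1) ≤ (1/2:ℝ) ^ n := by
            apply pow_le_pow_of_le_one (by norm_num) (by norm_num) (by omega)
          calc (1/2:ℝ) ^ (n-1) = 2 * (1/2:ℝ) ^ ((n-1)+1) := by ring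
            _ ≤ 2 * (1/2:ℝ) ^ n := by linarith
        exact h2

lemma cfVal_tendsto (a : ℕ → ℕ+) :
    Tendsto (fun n => cfApprox n a) atTop (𝓝 (cfVal a)) := by
  have hc : CauchySeq (fun n => cfApprox n a) :=
    cauchySeq_of_le_geometric (1/2 : ℝ) 2 (by norm_num) (fun n => dist_cfApprox n a)
  obtain ⟨L, hL⟩ := cauchySeq_tendsto_of_complete hc
  have : cfVal a = L := hL.limUnder_eq
  rw [this]; exact hL

lemma cfVal_mem (a : ℕ → ℕ+) :
    cfVal a ∈ Icc ((((a 0 : ℕ) : ℝ) + 1)⁻¹) (((a 0 : ℕ) : ℝ))⁻¹ := by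
  have hb := one_le_digit a 0
  have htd : Tendsto (fun n => cfApprox (n + 1) a) atTop (𝓝 (cfVal a)) :=
    (cfVal_tendsto a).comp (tendsto_add_atTop_nat 1)
  refine isClosed_Icc.mem_of_tendsto htd (Eventually.of_forall fun n => ?_)
  have hm := cfApprox_mem n (fun k => a (k + 1))
  show (((a 0 : ℕ):ℝ) + cfApprox n (fun k => a (k + 1)))⁻¹ ∈ _
  constructor
  · exact inv_anti₀ (by linarith [hm.1]) (by linarith [hm.2])
  · exact inv_anti₀ (by linarith) (by linarith [hm.1])

lemma measurable_cfApprox : ∀ n, Measurable (fun a : ℕ → ℕ+ => cfApprox n a) := by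
  intro n
  induction n with
  | zero => exact measurable_const
  | succ n ih =>
    show Measurable fun a : ℕ → ℕ+ => (((a 0 : ℕ):ℝ) + cfApprox n (fun k => a (k + 1)))⁻¹
    apply Measurable.inv
    apply Measurable.add
    · exact (measurable_from_top (f := fun j : ℕ+ => ((j : ℕ) : ℝ))).comp (measurable_pi_apply 0)
    · exact ih.comp (measurable_pi_lambda _ (fun k => measurable_pi_apply (k + 1)))

lemma measurable_cfVal : Measurable cfVal := by
  apply measurable_of_tendsto_metrizable measurable_cfApprox
  rw [tendsto_pi_nhds]
  exact cfVal_tendsto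

lemma measurableSet_digit (j : ℕ+) : MeasurableSet {a : ℕ → ℕ+ | a 0 = j} := by
  have : {a : ℕ → ℕ+ | a 0 = j} = (fun a : ℕ → ℕ+ => a 0) ⁻¹' {j} :=
    rfl
  rw [this]
  exact measurable_pi_apply 0 (by trivial)

lemma measure_digit {p : ℕ+ → ℝ} {m : Measure (ℕ → ℕ+)} (hb : IsBernoulli p m) (j : ℕ+) :
    m {a : ℕ → ℕ+ | a 0 = j} = ENNReal.ofReal (p j) := by
  have := hb 1 (fun _ => j)
  have hset : {a : ℕ → ℕ+ | ∀ k < 1, a k = j} = {a : ℕ → ℕ+ | a 0 = j} := by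
    ext a; simp [Nat.lt_one_iff]
  rw [hset] at this
  simpa using this

lemma measurableSet_smallDigit (N : ℕ) : MeasurableSet {a : ℕ → ℕ+ | (a 0 : ℕ) ≤ N} := by
  have : {a : ℕ → ℕ+ | (a 0 : ℕ) ≤ N} = (fun a : ℕ → ℕ+ => a 0) ⁻¹' {j | (j:ℕ) ≤ N} := rfl
  rw [this]
  exact measurable_pi_apply 0 (by trivial)

lemma measure_le_digits {p : ℕ+ → ℝ} {m : Measure (ℕ → ℕ+)} (hb : IsBernoulli p m) :
    ∀ N : ℕ, m {a : ℕ → ℕ+ | (a 0 : ℕ) ≤ N} =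
      ∑ i ∈ Finset.range N, ENNReal.ofReal (p i.succPNat) := by
  intro N
  induction N with
  | zero =>
    have : {a : ℕ → ℕ+ | (a 0 : ℕ) ≤ 0} = ∅ := by
      ext a
      simp only [Set.mem_setOf_eq, Set.mem_empty_iff_false, iff_false, not_le]
      exact (a 0).pos
    simp [this]
  | succ N ih =>
    have hsplit : {a : ℕ → ℕ+ | (a 0 : ℕ) ≤ N + 1} =
        {a : ℕ → ℕ+ | (a 0 : ℕ) ≤ N} ∪ {a : ℕ → ℕ+ | a 0 = N.succPNat} := by
      ext a
      simp only [Set.mem_union, Set.mem_setOf_eq]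
      constructor
      · intro h
        rcases Nat.lt_or_ge (a 0 : ℕ) (N + 1) with h' | h'
        · left; omega
        · right
          have : (a 0 : ℕ) = N + 1 := by omega
          apply PNat.coe_injective
          simpa [Nat.succPNat] using this
      · rintro (h | h)
        · omega
        · rw [h]; simp [Nat.succPNat]
    have hdisj : Disjoint {a : ℕ → ℕ+ | (a 0 : ℕ) ≤ N} {a : ℕ → ℕ+ | a 0 = N.succPNat} := by
      rw [Set.disjoint_left]
      intro a ha ha'
      simp only [Set.mem_setOf_eq] at ha ha'
      rw [ha'] at ha
      simp [Nat.succPNat] at ha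
    rw [hsplit, measure_union hdisj (measurableSet_digit _), ih, measure_digit hb,
      Finset.sum_range_succ]

/-- Let `N ∈ ℕ` and `0 < ε₀ < (1-ψ)/(2N)`.  If `p` has decreasing entries with `p₁ ≤ ψ`
and `p₂ ≤ ε₀`, then the Lyapunov exponent satisfies `∫ log |T'| dμ_p ≥ (1-ψ) log N`
(here `log |T'(x)| = -2 log x` on `(0,1)`). -/
theorem lyapunov_lower_bound
    (N : ℕ) (ε0 : ℝ) (hε0 : 0 < ε0) (hε0' : ε0 < (1 - psi) / (2 * N))
    (p : ℕ+ → ℝ) (m : Measure (ℕ → ℕ+))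
    (hp : IsProbVec p) (hm : IsProbabilityMeasure m) (hb : IsBernoulli p m)
    (hmono : Antitone p)
    (hp1 : p 1 ≤ psi) (hp2 : p 2 ≤ ε0) :
    ENNReal.ofReal ((1 - psi) * Real.log N) ≤
      ∫⁻ x, ENNReal.ofReal (-(2 * Real.log x)) ∂(m.map cfVal) := by
  -- N ≥ 1
  rcases Nat.eq_zero_or_pos N with rfl | hN
  · simp at hε0'; linarith
  have hψ0 : 0 ≤ psi := Real.sqrt_nonneg _
  have hψ1 : psi < 1 := by
    by_contra h
    push_neg at h
    have : (1 - psi) / (2 * N) ≤ 0 := by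
      apply div_nonpos_of_nonpos_of_nonneg (by linarith)
      positivity
    linarith
  have hNR : (1:ℝ) ≤ (N:ℝ) := by exact_mod_cast hN
  have hlogN : 0 ≤ Real.log N := Real.log_nonneg hNR
  -- bound on the sum of the first N probabilities
  have hsum : ∑ i ∈ Finset.range N, p i.succPNat ≤ (1 + psi) / 2 := by
    have key : ∑ i ∈ Finset.range N, p i.succPNat ≤ psi + (N - 1 : ℕ) * ε0 := by
      obtain ⟨M, rfl⟩ : ∃ M, N = M + 1 := ⟨N - 1, by omega⟩
      rw [Finset.sum_range_succ']
      have h0 : p (0:ℕ).succPNat ≤ psi := hp1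
      have hrest : ∑ i ∈ Finset.range M, p (i + 1).succPNat ≤ M * ε0 := by
        calc ∑ i ∈ Finset.range M, p (i + 1).succPNat ≤ ∑ _i ∈ Finset.range M, ε0 := by
              apply Finset.sum_le_sum
              intro i _
              calc p (i+1).succPNat ≤ p 2 := by
                    apply hmono
                    rw [← PNat.coe_le_coe]
                    simp [Nat.succPNat]
                _ ≤ ε0 := hp2
          _ = M * ε0 := by rw [Finset.sum_const, Finset.card_range, nsmul_eq_mul]
      have hcast : ((M + 1 - 1 : ℕ) : ℝ) = (M:ℝ) := by simp
      rw [hcast]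
      linarith
    have hNε : ((N - 1 : ℕ):ℝ) * ε0 ≤ (1 - psi) / 2 := by
      have h1 : ((N - 1 : ℕ):ℝ) ≤ (N:ℝ) := by
        have : (N - 1 : ℕ) ≤ N := Nat.sub_le _ _
        exact_mod_cast this
      have h2 : ((N - 1 : ℕ):ℝ) * ε0 ≤ (N:ℝ) * ε0 := by
        apply mul_le_mul_of_nonneg_right h1 hε0.le
      have h3 : (N:ℝ) * ε0 ≤ (N:ℝ) * ((1 - psi) / (2 * N)) :=
        mul_le_mul_of_nonneg_left hε0'.le (by positivity)
      have hN0 : (N:ℝ) ≠ 0 := by positivity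
      have h4 : (N:ℝ) * ((1 - psi) / (2 * N)) = (1 - psi) / 2 := by
        field_simp
      linarith
    linarith
  -- measure of the bad (small-digit) set
  have hbad : m {a : ℕ → ℕ+ | (a 0 : ℕ) ≤ N} ≤ ENNReal.ofReal ((1 + psi) / 2) := by
    rw [measure_le_digits hb N]
    calc ∑ i ∈ Finset.range N, ENNReal.ofReal (p i.succPNat)
        = ENNReal.ofReal (∑ i ∈ Finset.range N, p i.succPNat) := by
          rw [ENNReal.ofReal_sum_of_nonneg (fun i _ => hp.1 _)]
      _ ≤ ENNReal.ofReal ((1 + psi) / 2) := ENNReal.ofReal_le_ofReal hsum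
  -- measure of the good set
  set B : Set (ℕ → ℕ+) := {a : ℕ → ℕ+ | (a 0 : ℕ) ≤ N}ᶜ with hB
  have hgood : ENNReal.ofReal ((1 - psi) / 2) ≤ m B := by
    rw [hB, measure_compl (measurableSet_smallDigit N) (measure_ne_top m _), measure_univ]
    have heq : (1 : ℝ≥0∞) - ENNReal.ofReal ((1 + psi) / 2) = ENNReal.ofReal (1 - (1 + psi)/2) := by
      rw [← ENNReal.ofReal_one, ← ENNReal.ofReal_sub _ (by linarith)]
    calc ENNReal.ofReal ((1 - psi) / 2) = ENNReal.ofReal (1 - (1 + psi)/2) := by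
          congr 1; ring
      _ = 1 - ENNReal.ofReal ((1 + psi) / 2) := heq.symm
      _ ≤ 1 - m {a : ℕ → ℕ+ | (a 0 : ℕ) ≤ N} := tsub_le_tsub_left hbad _
  -- the good set maps into S = (0, 1/(N+1)]
  set S : Set ℝ := Ioc (0:ℝ) (((N:ℝ) + 1)⁻¹) with hS
  have hSmeas : MeasurableSet S := measurableSet_Ioc
  have hsub : B ⊆ cfVal ⁻¹' S := by
    intro a ha
    simp only [hB, Set.mem_compl_iff, Set.mem_setOf_eq, not_le] at ha
    have hmem := cfVal_mem a
    have hb1 : ((N:ℝ) + 1) ≤ ((a 0 : ℕ):ℝ) := by exact_mod_cast ha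
    constructor
    · calc (0:ℝ) < (((a 0 : ℕ):ℝ) + 1)⁻¹ := by positivity
        _ ≤ cfVal a := hmem.1
    · calc cfVal a ≤ (((a 0 : ℕ):ℝ))⁻¹ := hmem.2
        _ ≤ ((N:ℝ) + 1)⁻¹ := by
            apply inv_anti₀ (by positivity) hb1
  -- lower bound for the integrand on S
  have hintegrand : ∀ x ∈ S, ENNReal.ofReal (2 * Real.log N) ≤
      ENNReal.ofReal (-(2 * Real.log x)) := by
    intro x hx
    apply ENNReal.ofReal_le_ofReal
    have hx0 : 0 < x := hx.1
    have hlogx : Real.log x ≤ Real.log (((N:ℝ) + 1)⁻¹) := Real.log_le_log hx0 hx.2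
    rw [Real.log_inv] at hlogx
    have : Real.log N ≤ Real.log ((N:ℝ) + 1) := by
      apply Real.log_le_log (by positivity) (by linarith)
    linarith
  -- put it together
  have hmap : (m.map cfVal) S = m (cfVal ⁻¹' S) :=
    Measure.map_apply measurable_cfVal hSmeas
  have hmS : ENNReal.ofReal ((1 - psi) / 2) ≤ (m.map cfVal) S := by
    rw [hmap]
    exact le_trans hgood (measure_mono hsub)
  calc ENNReal.ofReal ((1 - psi) * Real.log N)
      = ENNReal.ofReal ((1 - psi)/2) * ENNReal.ofReal (2 * Real.log N) := by
        rw [← ENNReal.ofReal_mul (by linarith)]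
        congr 1; ring
    _ ≤ (m.map cfVal) S * ENNReal.ofReal (2 * Real.log N) := by
        exact mul_le_mul_left hmS _
    _ = ∫⁻ _x in S, ENNReal.ofReal (2 * Real.log N) ∂(m.map cfVal) := by
        rw [setLIntegral_const, mul_comm]
    _ ≤ ∫⁻ x in S, ENNReal.ofReal (-(2 * Real.log x)) ∂(m.map cfVal) := by
        exact setLIntegral_mono' hSmeas hintegrand
    _ ≤ ∫⁻ x, ENNReal.ofReal (-(2 * Real.log x)) ∂(m.map cfVal) :=
        setLIntegral_le_lintegral _ _
end

section
/- Let p be a probability vector with strictly positive entries, let t, β ∈ (0,1], and set g = −β log|T′| + t f_p on the irrationals of (0,1). Let a > 0 and let h be a positive function on the irrationals of (0,1) satisfying exp(−a|x−y|) ≤ h(x)/h(y) ≤ exp(a|x−y|) for all x, y. Define g̃ = g + log h − log(h∘T), and suppose that Σ_{n≥1} exp(g̃(1/(x+n))) = 1 for every irrational x ∈ (0,1) and that τ := sup_{n≥1} var_n(g̃)/(2/3)^n < ∞. Let μ be a Borel probability measure on [0,1] giving full mass to the irrationals and satisfying ∫ ( Σ_{n≥1} exp(g̃(1/(x+n)))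 w(1/(x+n)) ) dμ(x) = ∫ w dμ for every bounded Borel w. Then for every n ≥ 1, every (i_1,…,i_n) ∈ ℕ^n and every irrational z ∈ I_{i_1…i_n}: exp(−3τ − a) ≤ μ(I_{i_1…i_n}) / ( (p_{i_1}⋯p_{i_n})^t · |(T^n)′(z)|^{−β} ) ≤ exp(3τ + a). -/
open MeasureTheory Filter Set
open scoped ENNReal

/-- The `k`-th continued fraction digit of `x`: `i_{k+1} = ⌊1/(T^k x)⌋`. -/
noncomputable def cfDigit (x : ℝ) (k : ℕ) : ℕ := ⌊(gaussMap^[k] x)⁻¹⌋₊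

/-- The cylinder `I_{i_1…i_n}`: irrationals of `(0,1)` whose continued fraction expansion
starts with the word `i`. -/
def wordCyl (n : ℕ) (i : Fin n → ℕ+) : Set ℝ :=
  {x | x ∈ Set.Ioo (0 : ℝ) 1 ∧ Irrational x ∧ ∀ k : Fin n, cfDigit x k = (i k : ℕ)}

/-- The Bernoulli potential `f_p = ∑_n (log p_n) 1_{I_n}`. -/
noncomputable def fPot (p : ℕ+ → ℝ) (x : ℝ) : ℝ :=
  if h : 0 < ⌊x⁻¹⌋₊ then Real.log (p ⟨⌊x⁻¹⌋₊, h⟩) else 0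

/-- The normalized transfer operator
`(M w)(x) = ∑_{n ≥ 1} exp (g̃ (1/(x+n))) w (1/(x+n))` for the Gauss map. -/
noncomputable def transferM (gt : ℝ → ℝ) (w : ℝ → ℝ) : ℝ → ℝ :=
  fun x => ∑' n : ℕ+, Real.exp (gt ((x + ((n : ℕ) : ℝ))⁻¹)) * w ((x + ((n : ℕ) : ℝ))⁻¹)

namespace UGP

def gset : Set ℝ := {x | x ∈ Set.Ioo (0:ℝ) 1 ∧ Irrational x}

def cylL (l : List ℕ+) : Set ℝ :=
  {x | x ∈ gset ∧ ∀ (k : ℕ) (d : ℕ+), l[k]? = some d → cfDigit x k = (d:ℕ)}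

lemma cylL_subset_gset (l : List ℕ+) : cylL l ⊆ gset := fun _ hx => hx.1

lemma cylL_nil : cylL [] = gset := by
  ext x; simp [cylL]

noncomputable def brkR : List ℕ+ → ℝ → ℝ
  | [], x => x
  | d :: l, x => brkR l ((x + ((d:ℕ):ℝ))⁻¹)

noncomputable def SgR (f : ℝ → ℝ) : List ℕ+ → ℝ → ℝ
  | [], _ => 0
  | d :: l, x => SgR f l ((x + ((d:ℕ):ℝ))⁻¹) + f ((x + ((d:ℕ):ℝ))⁻¹)

lemma branch_mem {x : ℝ} (hx : x ∈ gset) (d : ℕ+) : (x + ((d:ℕ):ℝ))⁻¹ ∈ gset := by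
  obtain ⟨⟨h0, h1⟩, hirr⟩ := hx
  have hd : (1:ℝ) ≤ ((d:ℕ):ℝ) := by exact_mod_cast d.one_le
  have hlt : (1:ℝ) < x + ((d:ℕ):ℝ) := by linarith
  refine ⟨⟨by positivity, ?_⟩, ?_⟩
  · rw [inv_lt_one_iff₀]; right; exact hlt
  · exact (hirr.add_natCast d).inv

lemma gauss_branch {x : ℝ} (hx : x ∈ gset) (d : ℕ+) :
    gaussMap ((x + ((d:ℕ):ℝ))⁻¹) = x := by
  obtain ⟨⟨h0, h1⟩, hirr⟩ := hx
  have hd : (1:ℝ) ≤ ((d:ℕ):ℝ) := by exact_mod_cast d.one_le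
  have hne : (x + ((d:ℕ):ℝ))⁻¹ ≠ 0 := by positivity
  rw [gaussMap, if_neg hne, inv_inv, Int.fract_add_natCast, Int.fract_eq_self.2 ⟨h0.le, h1⟩]

lemma digit0_branch {x : ℝ} (hx : x ∈ gset) (d : ℕ+) :
    cfDigit ((x + ((d:ℕ):ℝ))⁻¹) 0 = (d:ℕ) := by
  obtain ⟨⟨h0, h1⟩, hirr⟩ := hx
  rw [cfDigit, Function.iterate_zero_apply, inv_inv, Nat.floor_add_natCast h0.le,
    Nat.floor_eq_zero.2 h1, zero_add]

lemma digit_succ_branch {x : ℝ} (hx : x ∈ gset) (d : ℕ+) (k : ℕ) :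
    cfDigit ((x + ((d:ℕ):ℝ))⁻¹) (k+1) = cfDigit x k := by
  rw [cfDigit, Function.iterate_succ_apply, gauss_branch hx d, cfDigit]

lemma gauss_mem {x : ℝ} (hx : x ∈ gset) : gaussMap x ∈ gset := by
  obtain ⟨⟨h0, h1⟩, hirr⟩ := hx
  have hne : x ≠ 0 := ne_of_gt h0
  rw [gaussMap, if_neg hne]
  have hi : Irrational (Int.fract x⁻¹) := by
    rw [Int.fract]; exact (hirr.inv).sub_intCast _
  refine ⟨⟨?_, Int.fract_lt_one _⟩, hi⟩
  rcases (Int.fract_nonneg x⁻¹).lt_or_eq with h | h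
  · exact h
  · exact absurd h.symm hi.ne_zero

lemma iter_gauss_mem {x : ℝ} (hx : x ∈ gset) (k : ℕ) : gaussMap^[k] x ∈ gset := by
  induction k with
  | zero => simpa using hx
  | succ k ih => rw [Function.iterate_succ_apply']; exact gauss_mem ih

lemma brkR_mem {x : ℝ} (hx : x ∈ gset) : ∀ l : List ℕ+, brkR l x ∈ gset := by
  intro l
  induction l generalizing x with
  | nil => exact hx
  | cons d l ih => exact ih (branch_mem hx d)

lemma iter_brkR {x : ℝ} (hx : x ∈ gset) : ∀ l : List ℕ+,
    gaussMap^[l.length] (brkR l x) = x := by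
  intro l
  induction l generalizing x with
  | nil => rfl
  | cons d l ih =>
    rw [List.length_cons, Function.iterate_succ_apply', brkR,
      ih (branch_mem hx d), gauss_branch hx d]

lemma brkR_mem_cyl {x : ℝ} (hx : x ∈ gset) : ∀ l : List ℕ+, brkR l x ∈ cylL l.reverse := by
  intro l
  induction l generalizing x with
  | nil => exact ⟨hx, by simp⟩
  | cons d l ih =>
    have hy := branch_mem hx d
    obtain ⟨hmem, hdig⟩ := ih hy
    refine ⟨hmem, ?_⟩
    intro k d' hkd
    rw [List.reverse_cons, List.getElem?_append] at hkd
    split_ifs at hkd with hlt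
    · exact hdig k d' hkd
    · push_neg at hlt
      rw [List.length_reverse] at hlt hkd
      have hk1 : k - l.length < [d].length := (List.getElem?_eq_some_iff.1 hkd).1
      simp only [List.length_cons, List.length_nil] at hk1
      have hk : k = l.length := by omega
      subst hk
      rw [Nat.sub_self, List.getElem?_cons_zero] at hkd
      obtain rfl : d = d' := Option.some_injective _ hkd
      show cfDigit (brkR (d :: l) x) l.length = (d:ℕ)
      have h2 : gaussMap^[l.length] (brkR (d::l) x) = (x + ((d:ℕ):ℝ))⁻¹ := by
        rw [brkR]; exact iter_brkR hy l
      rw [cfDigit, h2]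
      have := digit0_branch hx d
      rwa [cfDigit, Function.iterate_zero_apply] at this

lemma branch_cyl_iff {x : ℝ} (hx : x ∈ gset) (d d' : ℕ+) (l : List ℕ+) :
    (x + ((d:ℕ):ℝ))⁻¹ ∈ cylL (d' :: l) ↔ d = d' ∧ x ∈ cylL l := by
  constructor
  · rintro ⟨hmem, hdig⟩
    have h0 := hdig 0 d' (List.getElem?_cons_zero)
    rw [digit0_branch hx d] at h0
    refine ⟨by exact_mod_cast h0, hx, ?_⟩
    intro k e hke
    have := hdig (k+1) e (by rwa [List.getElem?_cons_succ])
    rwa [digit_succ_branch hx d] at this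
  · rintro ⟨rfl, hmemx, hdig⟩
    refine ⟨branch_mem hx d, ?_⟩
    intro k e hke
    cases k with
    | zero =>
      rw [List.getElem?_cons_zero] at hke
      rw [digit0_branch hx d]
      exact congrArg _ (Option.some_injective _ hke)
    | succ k =>
      rw [List.getElem?_cons_succ] at hke
      rw [digit_succ_branch hx d]
      exact hdig k e hke

lemma iter_mem_cyl_drop {y : ℝ} {l : List ℕ+} (hy : y ∈ cylL l) (j : ℕ) :
    gaussMap^[j] y ∈ cylL (l.drop j) := by
  refine ⟨iter_gauss_mem hy.1 j, ?_⟩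
  intro k d hkd
  rw [List.getElem?_drop] at hkd
  have := hy.2 (j+k) d hkd
  rwa [cfDigit, ← Function.iterate_add_apply, Nat.add_comm k j, ← cfDigit]

lemma SgR_eq_sum (f : ℝ → ℝ) {x : ℝ} (hx : x ∈ gset) : ∀ l : List ℕ+,
    SgR f l x = ∑ k ∈ Finset.range l.length, f (gaussMap^[k] (brkR l x)) := by
  intro l
  induction l generalizing x with
  | nil => simp [SgR, brkR]
  | cons d l ih =>
    have hy := branch_mem hx d
    rw [SgR, brkR, List.length_cons, Finset.sum_range_succ, ih hy,
      iter_brkR hy l]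

lemma cylL_eq_wordCyl (l : List ℕ+) :
    cylL l = wordCyl l.length (fun k => l.get k) := by
  ext x
  constructor
  · rintro ⟨⟨hIoo, hirr⟩, hdig⟩
    exact ⟨hIoo, hirr, fun k => hdig k _ (List.getElem?_eq_getElem k.isLt)⟩
  · rintro ⟨hIoo, hirr, hdig⟩
    refine ⟨⟨hIoo, hirr⟩, ?_⟩
    intro k d hkd
    obtain ⟨hk, he⟩ := List.getElem?_eq_some_iff.1 hkd
    have := hdig ⟨k, hk⟩
    simpa [he] using this

lemma wordCyl_eq_cylL {n : ℕ} (i : Fin n → ℕ+) :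
    wordCyl n i = cylL (List.ofFn i) := by
  ext x
  constructor
  · rintro ⟨hIoo, hirr, hdig⟩
    refine ⟨⟨hIoo, hirr⟩, ?_⟩
    intro k d hkd
    obtain ⟨hk, he⟩ := List.getElem?_eq_some_iff.1 hkd
    rw [List.getElem_ofFn] at he
    have := hdig ⟨k, by simpa [List.length_ofFn] using hk⟩
    simpa [he] using this
  · rintro ⟨⟨hIoo, hirr⟩, hdig⟩
    refine ⟨hIoo, hirr, ?_⟩
    intro k
    refine hdig k (i k) ?_
    rw [List.getElem?_eq_getElem (by simpa [List.length_ofFn] using k.isLt)]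
    congr 1
    rw [List.getElem_ofFn]



lemma measurable_gaussMap : Measurable gaussMap := by
  unfold gaussMap
  have hs : MeasurableSet {x : ℝ | x = 0} := by
    simpa using MeasurableSet.singleton (0:ℝ)
  exact Measurable.ite hs measurable_const (measurable_fract.comp measurable_inv)

lemma measurable_cfDigit (k : ℕ) : Measurable (fun x => cfDigit x k) := by
  unfold cfDigit
  exact Nat.measurable_floor.comp (measurable_inv.comp (measurable_gaussMap.iterate k))

lemma measurableSet_gset : MeasurableSet gset := by
  have h1 : MeasurableSet {x : ℝ | Irrational x} := by
    have : {x : ℝ | Irrational x} = (Set.range ((↑) : ℚ → ℝ))ᶜ := rfl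
    rw [this]
    exact ((Set.countable_range _).measurableSet).compl
  exact (measurableSet_Ioo.inter h1).congr rfl

lemma measurableSet_cylL (l : List ℕ+) : MeasurableSet (cylL l) := by
  have : cylL l = gset ∩ ⋂ (k : ℕ) (d : ℕ+) (_ : l[k]? = some d), {x | cfDigit x k = (d:ℕ)} := by
    ext x
    simp only [cylL, Set.mem_inter_iff, Set.mem_iInter, Set.mem_setOf_eq]
  rw [this]
  refine measurableSet_gset.inter ?_
  refine MeasurableSet.iInter fun k => MeasurableSet.iInter fun d => MeasurableSet.iInter fun _ => ?_
  exact measurable_cfDigit k (measurableSet_singleton ((d:ℕ)))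

lemma measurable_fPot (p : ℕ+ → ℝ) : Measurable (fPot p) := by
  have : fPot p = (fun m : ℕ => if h : 0 < m then Real.log (p ⟨m, h⟩) else 0) ∘
      (fun x : ℝ => ⌊x⁻¹⌋₊) := rfl
  rw [this]
  exact measurable_from_top.comp (Nat.measurable_floor.comp measurable_inv)

lemma measurable_SgR {f : ℝ → ℝ} (hf : Measurable f) : ∀ l : List ℕ+, Measurable (SgR f l) := by
  intro l
  induction l with
  | nil => exact measurable_const
  | cons d l ih =>
    have hb : Measurable (fun x : ℝ => (x + ((d:ℕ):ℝ))⁻¹) :=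
      (measurable_add_const _).inv
    exact (ih.comp hb).add (hf.comp hb)

lemma x0_mem : (Real.sqrt 2 - 1) ∈ gset := by
  have h1 : (1:ℝ) < Real.sqrt 2 := by
    rw [show (1:ℝ) = Real.sqrt 1 by simp]
    exact Real.sqrt_lt_sqrt (by norm_num) (by norm_num)
  have h2 : Real.sqrt 2 < 2 := by
    nlinarith [Real.sq_sqrt (by norm_num : (0:ℝ) ≤ 2), Real.sqrt_nonneg 2]
  refine ⟨⟨by linarith, by linarith⟩, ?_⟩
  have := irrational_sqrt_two.sub_intCast 1
  simpa using this


lemma geom_helper (m : ℕ) : ∑ k ∈ Finset.range m, ((2:ℝ)/3)^(m-k) ≤ 2 := by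
  have h1 : ∑ k ∈ Finset.range m, ((2:ℝ)/3)^(m-k)
      = ∑ j ∈ Finset.range m, ((2:ℝ)/3)^(j+1) := by
    rw [← Finset.sum_range_reflect]
    refine Finset.sum_congr rfl fun k hk => ?_
    rw [Finset.mem_range] at hk
    congr 1; omega
  rw [h1]
  have h2 : ∑ j ∈ Finset.range m, ((2:ℝ)/3)^(j+1)
      = (2/3) * ∑ j ∈ Finset.range m, ((2:ℝ)/3)^j := by
    rw [Finset.mul_sum]; exact Finset.sum_congr rfl fun j _ => by ring
  rw [h2, geom_sum_eq (by norm_num) m]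
  have h4 : (((2:ℝ)/3)^m - 1)/((2:ℝ)/3-1) = 3*(1 - ((2:ℝ)/3)^m) := by ring
  have h3 : (0:ℝ) ≤ (2/3:ℝ)^m := by positivity
  rw [h4]
  linarith

end UGP

/-- **Uniform Gibbs property** (Lemma 4.7): let `g = -β log|T'| + t f_p`,
`g̃ = g + log h - log (h∘T)` be normalized (branch weights summing to `1`), with `h`
`a`-regular and `var_n(g̃) ≤ τ (2/3)^n`.  If `μ` is the associated invariant measure, then
for every cylinder `I_{i_1…i_n}` and every `z ∈ I_{i_1…i_n}`,
`μ(I_{i_1…i_n})` is within multiplicative factor `exp(3τ + a)` of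
`(p_{i_1}⋯p_{i_n})^t |(T^n)'(z)|^{-β}` (note `|(T^n)'(z)|^{-β} = (∏_{k<n} (T^k z)²)^β`). -/
theorem uniform_gibbs_property
    (p : ℕ+ → ℝ) (hp : IsProbVec p) (hppos : ∀ n, 0 < p n)
    (t β : ℝ) (ht : t ∈ Set.Ioc (0 : ℝ) 1) (hβ : β ∈ Set.Ioc (0 : ℝ) 1)
    (a : ℝ) (ha : 0 < a) (h : ℝ → ℝ)
    (hhpos : ∀ x ∈ Set.Ioo (0 : ℝ) 1, Irrational x → 0 < h x)
    (hreg : ∀ x ∈ Set.Ioo (0 : ℝ) 1, ∀ y ∈ Set.Ioo (0 : ℝ) 1, Irrational x → Irrational y →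
      Real.exp (-(a * |x - y|)) ≤ h x / h y ∧ h x / h y ≤ Real.exp (a * |x - y|))
    (gt : ℝ → ℝ)
    (hgt : ∀ x, gt x =
      (-β * (-(2 * Real.log x)) + t * fPot p x) + Real.log (h x) - Real.log (h (gaussMap x)))
    (hnorm : ∀ x ∈ Set.Ioo (0 : ℝ) 1, Irrational x →
      ∑' n : ℕ+, Real.exp (gt ((x + ((n : ℕ) : ℝ))⁻¹)) = 1)
    (τ : ℝ)
    (hτ : ∀ n : ℕ, 1 ≤ n → ∀ i : Fin n → ℕ+,
      ∀ x ∈ wordCyl n i, ∀ y ∈ wordCyl n i, |gt x - gt y| ≤ τ * (2 / 3) ^ n)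
    (μ : Measure ℝ) (hμ : IsProbabilityMeasure μ)
    (hfull : μ {x | x ∈ Set.Ioo (0 : ℝ) 1 ∧ Irrational x} = 1)
    (hinv : ∀ w : ℝ → ℝ, Measurable w → (∃ C : ℝ, ∀ x, |w x| ≤ C) →
      ∫ x, transferM gt w x ∂μ = ∫ x, w x ∂μ) :
    ∀ n : ℕ, 1 ≤ n → ∀ i : Fin n → ℕ+, ∀ z ∈ wordCyl n i,
      ENNReal.ofReal (Real.exp (-(3 * τ + a)) *
          ((∏ k : Fin n, p (i k) ^ t) * (∏ k ∈ Finset.range n, (gaussMap^[k] z) ^ 2) ^ β))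
        ≤ μ (wordCyl n i) ∧
      μ (wordCyl n i) ≤
        ENNReal.ofReal (Real.exp (3 * τ + a) *
          ((∏ k : Fin n, p (i k) ^ t) * (∏ k ∈ Finset.range n, (gaussMap^[k] z) ^ 2) ^ β)) := by
  intro n hn i z hz
  obtain ⟨ht0, ht1⟩ := ht
  obtain ⟨hβ0, hβ1⟩ := hβ
  have hzg : z ∈ UGP.gset := ⟨hz.1, hz.2.1⟩
  set l : List ℕ+ := List.ofFn i with hl
  have hlen : l.length = n := by simp [hl]
  have hzc : z ∈ UGP.cylL l := by rw [hl, ← UGP.wordCyl_eq_cylL]; exact hz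
  have hgfull : μ UGP.gset = 1 := hfull
  -- τ ≥ 0
  have hτ0 : 0 ≤ τ := by
    have h1 := hτ n hn i z hz z hz
    rw [sub_self, abs_zero] at h1
    have h2 : (0:ℝ) < (2/3:ℝ)^n := by positivity
    nlinarith
  -- Lipschitz extension of log ∘ h
  have hlip : LipschitzOnWith (Real.toNNReal a) (fun x => Real.log (h x)) UGP.gset := by
    rw [lipschitzOnWith_iff_dist_le_mul]
    intro x hx y hy
    rw [Real.dist_eq, Real.dist_eq, Real.coe_toNNReal a ha.le]
    have hxp := hhpos x hx.1 hx.2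
    have hyp := hhpos y hy.1 hy.2
    obtain ⟨hr1, hr2⟩ := hreg x hx.1 y hy.1 hx.2 hy.2
    have hlog1 : -(a * |x - y|) ≤ Real.log (h x) - Real.log (h y) := by
      have := Real.log_le_log (Real.exp_pos _) hr1
      rwa [Real.log_exp, Real.log_div hxp.ne' hyp.ne'] at this
    have hlog2 : Real.log (h x) - Real.log (h y) ≤ a * |x - y| := by
      have := Real.log_le_log (by positivity) hr2
      rwa [Real.log_exp, Real.log_div hxp.ne' hyp.ne'] at this
    rw [abs_le]; exact ⟨by linarith, hlog2⟩
  obtain ⟨H, hHlip, hHeq⟩ := hlip.extend_real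
  set GT : ℝ → ℝ := fun x => 2*β*Real.log x + t * fPot p x + H x - H (gaussMap x) with hGT
  have hGTmeas : Measurable GT := by
    refine Measurable.sub (Measurable.add (Measurable.add ?_ ?_) ?_) ?_
    · exact measurable_const.mul Real.measurable_log
    · exact measurable_const.mul (UGP.measurable_fPot p)
    · exact hHlip.continuous.measurable
    · exact hHlip.continuous.measurable.comp UGP.measurable_gaussMap
  have hgtGT : ∀ x ∈ UGP.gset, gt x = GT x := by
    intro x hxg
    have h1 : Real.log (h x) = H x := hHeq hxg
    have h2 : Real.log (h (gaussMap x)) = H (gaussMap x) := hHeq (UGP.gauss_mem hxg)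
    rw [hgt x, hGT, h1, h2]
    ring
  -- SgR with GT equals Birkhoff sums of gt along branch orbits
  have hSgR_gt : ∀ (l' : List ℕ+) (x : ℝ), x ∈ UGP.gset →
      UGP.SgR GT l' x
        = ∑ k ∈ Finset.range l'.length, gt (gaussMap^[k] (UGP.brkR l' x)) := by
    intro l' x hx
    rw [UGP.SgR_eq_sum GT hx l']
    exact Finset.sum_congr rfl fun k _ =>
      (hgtGT _ (UGP.iter_gauss_mem (UGP.brkR_mem hx l') k)).symm
  -- distortion estimate
  have hdist : ∀ (l' : List ℕ+), ∀ y ∈ UGP.cylL l', ∀ y' ∈ UGP.cylL l',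
      |∑ k ∈ Finset.range l'.length, gt (gaussMap^[k] y)
        - ∑ k ∈ Finset.range l'.length, gt (gaussMap^[k] y')| ≤ 2 * τ := by
    intro l' y hy y' hy'
    rw [← Finset.sum_sub_distrib]
    have hb : ∀ k ∈ Finset.range l'.length,
        |gt (gaussMap^[k] y) - gt (gaussMap^[k] y')| ≤ τ * (2/3:ℝ)^(l'.length - k) := by
      intro k hk
      have hk' : k < l'.length := Finset.mem_range.1 hk
      have h1 := UGP.iter_mem_cyl_drop hy k
      have h2 := UGP.iter_mem_cyl_drop hy' k
      rw [UGP.cylL_eq_wordCyl] at h1 h2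
      have hm1 : 1 ≤ (l'.drop k).length := by
        rw [List.length_drop]; omega
      have := hτ (l'.drop k).length hm1 (fun j => (l'.drop k).get j) _ h1 _ h2
      rwa [List.length_drop] at this
    calc |∑ k ∈ Finset.range l'.length, (gt (gaussMap^[k] y) - gt (gaussMap^[k] y'))|
        ≤ ∑ k ∈ Finset.range l'.length, |gt (gaussMap^[k] y) - gt (gaussMap^[k] y')| :=
          Finset.abs_sum_le_sum_abs _ _
      _ ≤ ∑ k ∈ Finset.range l'.length, τ * (2/3:ℝ)^(l'.length - k) :=
          Finset.sum_le_sum hb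
      _ = τ * ∑ k ∈ Finset.range l'.length, (2/3:ℝ)^(l'.length - k) := by
          rw [Finset.mul_sum]
      _ ≤ τ * 2 := by
          refine mul_le_mul_of_nonneg_left (UGP.geom_helper l'.length) hτ0
      _ = 2 * τ := by ring
  -- uniform bound for SgR on gset
  have hbdd : ∀ (pre : List ℕ+) (x : ℝ), x ∈ UGP.gset →
      UGP.SgR GT pre x ≤ |UGP.SgR GT pre (Real.sqrt 2 - 1)| + 2*τ := by
    intro pre x hx
    have h1 := hdist pre.reverse (UGP.brkR pre x) (UGP.brkR_mem_cyl hx pre)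
      (UGP.brkR pre (Real.sqrt 2 - 1)) (UGP.brkR_mem_cyl UGP.x0_mem pre)
    rw [List.length_reverse] at h1
    rw [← hSgR_gt pre x hx, ← hSgR_gt pre _ UGP.x0_mem] at h1
    have h2 := (abs_le.1 h1).2
    have h3 := le_abs_self (UGP.SgR GT pre (Real.sqrt 2 - 1))
    linarith
  -- the chain of integral identities
  have hchain : ∀ (suf pre : List ℕ+),
      ∫ x, Set.indicator (UGP.cylL suf) (fun y => Real.exp (UGP.SgR GT pre y)) x ∂μ
        = ∫ x, Set.indicator (UGP.cylL [])
            (fun y => Real.exp (UGP.SgR GT (suf.reverse ++ pre) y)) x ∂μ := by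
    intro suf
    induction suf with
    | nil => intro pre; simp
    | cons d suf ih =>
      intro pre
      set w : ℝ → ℝ :=
        Set.indicator (UGP.cylL (d :: suf)) (fun y => Real.exp (UGP.SgR GT pre y)) with hw
      have hwmeas : Measurable w :=
        Measurable.indicator ((UGP.measurable_SgR hGTmeas pre).exp) (UGP.measurableSet_cylL _)
      have hwbd : ∃ C : ℝ, ∀ x, |w x| ≤ C := by
        refine ⟨Real.exp (|UGP.SgR GT pre (Real.sqrt 2 - 1)| + 2*τ), fun x => ?_⟩
        by_cases hx : x ∈ UGP.cylL (d :: suf)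
        · rw [hw, Set.indicator_of_mem hx, abs_of_pos (Real.exp_pos _)]
          exact Real.exp_le_exp.2 (hbdd pre x (UGP.cylL_subset_gset _ hx))
        · rw [hw, Set.indicator_of_notMem hx, abs_zero]
          exact (Real.exp_pos _).le
      have hstep := hinv w hwmeas hwbd
      have hcongr : ∀ x ∈ UGP.gset, transferM gt w x
          = Set.indicator (UGP.cylL suf) (fun y => Real.exp (UGP.SgR GT (d :: pre) y)) x := by
        intro x hx
        rw [transferM]
        by_cases hxs : x ∈ UGP.cylL suf
        · rw [Set.indicator_of_mem hxs]
          rw [tsum_eq_single d ?_]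
          · have hyd : (x + ((d:ℕ):ℝ))⁻¹ ∈ UGP.cylL (d :: suf) :=
              (UGP.branch_cyl_iff hx d d suf).2 ⟨rfl, hxs⟩
            rw [hw, Set.indicator_of_mem hyd, ← Real.exp_add]
            congr 1
            rw [show UGP.SgR GT (d::pre) x
                = UGP.SgR GT pre ((x + ((d:ℕ):ℝ))⁻¹) + GT ((x + ((d:ℕ):ℝ))⁻¹) from rfl]
            rw [hgtGT _ (UGP.branch_mem hx d)]
            ring
          · intro m hm
            have hnm : (x + ((m:ℕ):ℝ))⁻¹ ∉ UGP.cylL (d :: suf) := fun hc =>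
              hm ((UGP.branch_cyl_iff hx m d suf).1 hc).1
            rw [hw, Set.indicator_of_notMem hnm, mul_zero]
        · rw [Set.indicator_of_notMem hxs]
          have hz0 : ∀ m : ℕ+,
              Real.exp (gt ((x + ((m:ℕ):ℝ))⁻¹)) * w ((x + ((m:ℕ):ℝ))⁻¹) = 0 := by
            intro m
            have hnm : (x + ((m:ℕ):ℝ))⁻¹ ∉ UGP.cylL (d :: suf) := fun hc =>
              hxs ((UGP.branch_cyl_iff hx m d suf).1 hc).2
            rw [hw, Set.indicator_of_notMem hnm, mul_zero]
          rw [tsum_congr hz0, tsum_zero]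
      have hgc : μ UGP.gsetᶜ = 0 := by
        rw [measure_compl UGP.measurableSet_gset (by rw [hgfull]; exact ENNReal.one_ne_top), hgfull]
        simp
      have hae : transferM gt w
          =ᵐ[μ] Set.indicator (UGP.cylL suf) (fun y => Real.exp (UGP.SgR GT (d::pre) y)) := by
        rw [Filter.EventuallyEq, ae_iff]
        refine measure_mono_null ?_ hgc
        intro x hx
        simp only [Set.mem_setOf_eq, Set.mem_compl_iff] at hx ⊢
        intro hxg
        exact hx (hcongr x hxg)
      calc ∫ x, w x ∂μ
          = ∫ x, transferM gt w x ∂μ := hstep.symm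
        _ = ∫ x, Set.indicator (UGP.cylL suf)
              (fun y => Real.exp (UGP.SgR GT (d::pre) y)) x ∂μ := integral_congr_ae hae
        _ = ∫ x, Set.indicator (UGP.cylL [])
              (fun y => Real.exp (UGP.SgR GT (suf.reverse ++ (d::pre)) y)) x ∂μ := ih (d::pre)
        _ = ∫ x, Set.indicator (UGP.cylL [])
              (fun y => Real.exp (UGP.SgR GT ((d::suf).reverse ++ pre) y)) x ∂μ := by
            rw [List.reverse_cons, List.append_assoc, List.singleton_append]
  -- key identity
  have hkey : (μ (UGP.cylL l)).toReal
      = ∫ x, Set.indicator (UGP.cylL [])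
          (fun y => Real.exp (UGP.SgR GT l.reverse y)) x ∂μ := by
    have h0 : ∫ x, Set.indicator (UGP.cylL l) (fun y => Real.exp (UGP.SgR GT [] y)) x ∂μ
        = (μ (UGP.cylL l)).toReal := by
      have he : (fun y : ℝ => Real.exp (UGP.SgR GT [] y)) = fun _ => (1:ℝ) := by
        funext y; simp [UGP.SgR]
      rw [he, integral_indicator_const (1:ℝ) (UGP.measurableSet_cylL l), smul_eq_mul, mul_one, measureReal_def]
    rw [← h0, hchain l [], List.append_nil]
  -- value of the Birkhoff sum at z
  set P : ℝ := (∏ k : Fin n, p (i k) ^ t)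
      * (∏ k ∈ Finset.range n, (gaussMap^[k] z) ^ 2) ^ β with hP
  have hTpos : ∀ k : ℕ, 0 < gaussMap^[k] z := fun k => (UGP.iter_gauss_mem hzg k).1.1
  have hQpos : (0:ℝ) < ∏ k ∈ Finset.range n, (gaussMap^[k] z) ^ 2 :=
    Finset.prod_pos fun k _ => pow_pos (hTpos k) 2
  have hPpos : 0 < P := by
    rw [hP]
    refine mul_pos (Finset.prod_pos fun k _ => Real.rpow_pos_of_pos (hppos _) t) ?_
    exact Real.rpow_pos_of_pos hQpos β
  have hhz : 0 < h z := hhpos z hz.1 hz.2.1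
  have hw' : gaussMap^[n] z ∈ UGP.gset := UGP.iter_gauss_mem hzg n
  have hhw : 0 < h (gaussMap^[n] z) := hhpos _ hw'.1 hw'.2
  set E : ℝ := ∑ k ∈ Finset.range n, gt (gaussMap^[k] z) with hE
  have hEeq : Real.exp E = P * (h z / h (gaussMap^[n] z)) := by
    have hterm : ∀ k : Fin n, gt (gaussMap^[(k:ℕ)] z)
        = β * Real.log ((gaussMap^[(k:ℕ)] z)^2) + t * Real.log (p (i k))
          + (Real.log (h (gaussMap^[(k:ℕ)] z)) - Real.log (h (gaussMap^[(k:ℕ)+1] z))) := by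
      intro k
      rw [hgt]
      have hfp : fPot p (gaussMap^[(k:ℕ)] z) = Real.log (p (i k)) := by
        have hdig : ⌊(gaussMap^[(k:ℕ)] z)⁻¹⌋₊ = ((i k : ℕ)) := hz.2.2 k
        rw [fPot]
        have hpos : 0 < ⌊(gaussMap^[(k:ℕ)] z)⁻¹⌋₊ := by rw [hdig]; exact (i k).pos
        rw [dif_pos hpos]
        have hmk : (⟨⌊(gaussMap^[(k:ℕ)] z)⁻¹⌋₊, hpos⟩ : ℕ+) = i k := Subtype.ext hdig
        rw [hmk]
      have hit : gaussMap (gaussMap^[(k:ℕ)] z) = gaussMap^[(k:ℕ)+1] z :=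
        (Function.iterate_succ_apply' gaussMap (k:ℕ) z).symm
      rw [hfp, hit]
      have hlogsq : Real.log ((gaussMap^[(k:ℕ)] z)^2) = 2 * Real.log (gaussMap^[(k:ℕ)] z) := by
        rw [Real.log_pow]; push_cast; ring
      rw [hlogsq]
      ring
    have hEfin : E = ∑ k : Fin n, gt (gaussMap^[(k:ℕ)] z) := by
      rw [hE, ← Fin.sum_univ_eq_sum_range]
    have hsplit : E = β * (∑ k : Fin n, Real.log ((gaussMap^[(k:ℕ)] z)^2))
        + t * (∑ k : Fin n, Real.log (p (i k)))
        + (Real.log (h z) - Real.log (h (gaussMap^[n] z))) := by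
      rw [hEfin]
      rw [Finset.sum_congr rfl (fun k _ => hterm k)]
      rw [Finset.sum_add_distrib, Finset.sum_add_distrib, ← Finset.mul_sum, ← Finset.mul_sum]
      congr 1
      have : ∑ k : Fin n, (Real.log (h (gaussMap^[(k:ℕ)] z)) - Real.log (h (gaussMap^[(k:ℕ)+1] z)))
          = ∑ k ∈ Finset.range n,
              ((fun m => Real.log (h (gaussMap^[m] z))) k
                - (fun m => Real.log (h (gaussMap^[m] z))) (k+1)) := by
        rw [← Fin.sum_univ_eq_sum_range]
      rw [this, Finset.sum_range_sub']
      simp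
    have hsum1 : ∑ k : Fin n, Real.log ((gaussMap^[(k:ℕ)] z)^2)
        = Real.log (∏ k ∈ Finset.range n, (gaussMap^[k] z)^2) := by
      rw [Real.log_prod (fun k _ => by have := hTpos k; positivity),
        ← Fin.sum_univ_eq_sum_range]
    have hprod2 : Real.exp (t * ∑ k : Fin n, Real.log (p (i k)))
        = ∏ k : Fin n, p (i k) ^ t := by
      rw [Finset.mul_sum, Real.exp_sum]
      refine Finset.prod_congr rfl fun k _ => ?_
      rw [Real.rpow_def_of_pos (hppos (i k)) t, mul_comm (Real.log (p (i k))) t]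
    rw [hsplit, Real.exp_add, Real.exp_add, hsum1]
    rw [show Real.exp (β * Real.log (∏ k ∈ Finset.range n, (gaussMap^[k] z)^2))
        = (∏ k ∈ Finset.range n, (gaussMap^[k] z)^2) ^ β by
      rw [Real.rpow_def_of_pos hQpos, mul_comm]]
    rw [hprod2, Real.exp_sub, Real.exp_log hhz, Real.exp_log hhw, hP]
    ring
  -- h-ratio bounds
  have hratio : Real.exp (-a) ≤ h z / h (gaussMap^[n] z)
      ∧ h z / h (gaussMap^[n] z) ≤ Real.exp a := by
    obtain ⟨hr1, hr2⟩ := hreg z hz.1 _ hw'.1 hz.2.1 hw'.2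
    have habs : |z - gaussMap^[n] z| ≤ 1 := by
      have h1 := hz.1.1; have h2 := hz.1.2
      have h3 := hw'.1.1; have h4 := hw'.1.2
      rw [abs_le]; constructor <;> linarith
    constructor
    · refine le_trans ?_ hr1
      rw [Real.exp_le_exp]
      have : a * |z - gaussMap^[n] z| ≤ a * 1 := mul_le_mul_of_nonneg_left habs ha.le
      linarith
    · refine le_trans hr2 ?_
      rw [Real.exp_le_exp]
      have : a * |z - gaussMap^[n] z| ≤ a * 1 := mul_le_mul_of_nonneg_left habs ha.le
      linarith
  -- pointwise bounds for the final integrand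
  have hval : ∀ x ∈ UGP.gset,
      Real.exp (-(3*τ+a)) * P ≤ Real.exp (UGP.SgR GT l.reverse x)
      ∧ Real.exp (UGP.SgR GT l.reverse x) ≤ Real.exp (3*τ+a) * P := by
    intro x hx
    have hy : UGP.brkR l.reverse x ∈ UGP.cylL l := by
      have := UGP.brkR_mem_cyl hx l.reverse
      rwa [List.reverse_reverse] at this
    have hd := hdist l (UGP.brkR l.reverse x) hy z hzc
    rw [hlen] at hd
    have hSx : UGP.SgR GT l.reverse x
        = ∑ k ∈ Finset.range n, gt (gaussMap^[k] (UGP.brkR l.reverse x)) := by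
      rw [hSgR_gt l.reverse x hx, List.length_reverse, hlen]
    rw [← hSx, ← hE] at hd
    obtain ⟨hd1, hd2⟩ := abs_le.1 hd
    have hexp1 : Real.exp (E - 2*τ) ≤ Real.exp (UGP.SgR GT l.reverse x) :=
      Real.exp_le_exp.2 (by linarith)
    have hexp2 : Real.exp (UGP.SgR GT l.reverse x) ≤ Real.exp (E + 2*τ) :=
      Real.exp_le_exp.2 (by linarith)
    have hElow : P * Real.exp (-a) ≤ Real.exp E := by
      rw [hEeq]
      exact mul_le_mul_of_nonneg_left hratio.1 hPpos.le
    have hEhigh : Real.exp E ≤ P * Real.exp a := by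
      rw [hEeq]
      exact mul_le_mul_of_nonneg_left hratio.2 hPpos.le
    constructor
    · calc Real.exp (-(3*τ+a)) * P
          ≤ Real.exp (-(2*τ+a)) * P := by
            refine mul_le_mul_of_nonneg_right (Real.exp_le_exp.2 (by linarith)) hPpos.le
        _ = (P * Real.exp (-a)) * Real.exp (-(2*τ)) := by
            rw [show -(2*τ+a) = -a + -(2*τ) by ring, Real.exp_add]; ring
        _ ≤ Real.exp E * Real.exp (-(2*τ)) :=
            mul_le_mul_of_nonneg_right hElow (Real.exp_pos _).le
        _ = Real.exp (E - 2*τ) := by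
            rw [show E - 2*τ = E + -(2*τ) by ring, Real.exp_add]
        _ ≤ _ := hexp1
    · calc Real.exp (UGP.SgR GT l.reverse x)
          ≤ Real.exp (E + 2*τ) := hexp2
        _ = Real.exp E * Real.exp (2*τ) := by rw [← Real.exp_add]
        _ ≤ (P * Real.exp a) * Real.exp (2*τ) :=
            mul_le_mul_of_nonneg_right hEhigh (Real.exp_pos _).le
        _ = Real.exp (2*τ+a) * P := by
            rw [show 2*τ+a = a + 2*τ by ring, Real.exp_add]; ring
        _ ≤ Real.exp (3*τ+a) * P := by
            refine mul_le_mul_of_nonneg_right (Real.exp_le_exp.2 (by linarith)) hPpos.le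
  -- integral bounds
  set wfin : ℝ → ℝ :=
    Set.indicator (UGP.cylL []) (fun y => Real.exp (UGP.SgR GT l.reverse y)) with hwfin
  have hwfinmeas : Measurable wfin :=
    Measurable.indicator ((UGP.measurable_SgR hGTmeas l.reverse).exp) (UGP.measurableSet_cylL _)
  have hwfin_int : Integrable wfin μ := by
    refine ⟨hwfinmeas.aestronglyMeasurable, ?_⟩
    refine HasFiniteIntegral.of_bounded (C := Real.exp (3*τ+a) * P) (ae_of_all μ fun x => ?_)
    rw [Real.norm_eq_abs]
    by_cases hx : x ∈ UGP.cylL []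
    · rw [hwfin, Set.indicator_of_mem hx, abs_of_pos (Real.exp_pos _)]
      exact (hval x (by rwa [UGP.cylL_nil] at hx)).2
    · rw [hwfin, Set.indicator_of_notMem hx, abs_zero]
      positivity
  have hlow : Real.exp (-(3*τ+a)) * P ≤ ∫ x, wfin x ∂μ := by
    have hle : ∀ x, Set.indicator UGP.gset (fun _ => Real.exp (-(3*τ+a)) * P) x
        ≤ wfin x := by
      intro x
      by_cases hx : x ∈ UGP.gset
      · rw [Set.indicator_of_mem hx, hwfin,
          Set.indicator_of_mem (by rwa [UGP.cylL_nil])]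
        exact (hval x hx).1
      · rw [Set.indicator_of_notMem hx, hwfin,
          Set.indicator_of_notMem (by rwa [UGP.cylL_nil])]
    have h1 : ∫ x, Set.indicator UGP.gset (fun _ => Real.exp (-(3*τ+a)) * P) x ∂μ
        = Real.exp (-(3*τ+a)) * P := by
      rw [integral_indicator_const _ UGP.measurableSet_gset, measureReal_def, hgfull]
      simp
    rw [← h1]
    refine integral_mono ?_ hwfin_int hle
    exact (integrable_const _).indicator UGP.measurableSet_gset
  have hhigh : ∫ x, wfin x ∂μ ≤ Real.exp (3*τ+a) * P := by
    have hle : ∀ x, wfin x ≤ Real.exp (3*τ+a) * P := by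
      intro x
      by_cases hx : x ∈ UGP.cylL []
      · rw [hwfin, Set.indicator_of_mem hx]
        exact (hval x (by rwa [UGP.cylL_nil] at hx)).2
      · rw [hwfin, Set.indicator_of_notMem hx]
        positivity
    have h1 : ∫ _x, (Real.exp (3*τ+a) * P) ∂μ = Real.exp (3*τ+a) * P := by
      rw [integral_const, measureReal_def, measure_univ]
      simp
    rw [← h1]
    exact integral_mono hwfin_int (integrable_const _) hle
  -- conclude
  have hcyl : μ (wordCyl n i) = μ (UGP.cylL l) := by rw [hl, ← UGP.wordCyl_eq_cylL]
  have hfin : μ (UGP.cylL l) ≠ ⊤ := measure_ne_top μ _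
  have htr : (μ (UGP.cylL l)).toReal = ∫ x, wfin x ∂μ := hkey
  constructor
  · rw [hcyl, ← ENNReal.ofReal_toReal hfin, htr]
    exact ENNReal.ofReal_le_ofReal hlow
  · rw [hcyl, ← ENNReal.ofReal_toReal hfin, htr]
    exact ENNReal.ofReal_le_ofReal hhigh
end
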